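/- arXiv:1207.0577 — 2 statements merged into one kernel-verified Lean document; each statement's English description precedes it below -/
import Mathlib

section
/- Let Ψ be a matrix with N columns, s, l positive integers, T₀ with |T₀| = s, T₀₁ = T₀ ∪ T₁ with T₁ the l largest entries of h outside T₀. Define A₀(Ψ) = ρ⁻(s+l,Ψ) − 3√(s/l)[ρ⁺(s+2l,Ψ) − ρ⁻(s+2l,Ψ)] and A₁(Ψ) = 4[ρ⁺(s+2l,Ψ) − ρ⁻(s+2l,Ψ)]. If h satisfies the cone condition ‖h_{T₀ᶜ}‖₁ ≤ 3‖h_{T₀}‖₁ + 4‖x*_{T₀ᶜ}‖₁, then ‖Ψh‖₂² ≥ A₀(Ψ)‖h_{T₀₁}‖₂² − A₁(Ψ)‖h_{T₀₁}‖₂‖x*_{T₀ᶜ}‖₁/√l. -/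
def restrict {N : ℕ} (T : Finset (Fin N)) (h : Fin N → ℝ) : Fin N → ℝ :=
  fun i => if i ∈ T then h i else 0

def l2sq {m : ℕ} (v : Fin m → ℝ) : ℝ := ∑ i, v i ^ 2
noncomputable def l2Norm {m : ℕ} (v : Fin m → ℝ) : ℝ := Real.sqrt (∑ i, v i ^ 2)
def l1Norm {N : ℕ} (v : Fin N → ℝ) : ℝ := ∑ i, |v i|

noncomputable def rhoMinus {m N : ℕ} (k : ℕ) (Ψ : Matrix (Fin m) (Fin N) ℝ) : ℝ :=
  sInf {r | ∃ (T : Finset (Fin N)) (h : Fin N → ℝ), T.card ≤ k ∧ restrict T h ≠ 0 ∧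
    r = l2sq (Ψ.mulVec (restrict T h)) / l2sq (restrict T h)}

noncomputable def rhoPlus {m N : ℕ} (k : ℕ) (Ψ : Matrix (Fin m) (Fin N) ℝ) : ℝ :=
  sSup {r | ∃ (T : Finset (Fin N)) (h : Fin N → ℝ), T.card ≤ k ∧ restrict T h ≠ 0 ∧
    r = l2sq (Ψ.mulVec (restrict T h)) / l2sq (restrict T h)}

noncomputable def A0 {m N : ℕ} (s l : ℕ) (Ψ : Matrix (Fin m) (Fin N) ℝ) : ℝ :=
  rhoMinus (s + l) Ψ - 3 * Real.sqrt ((s : ℝ) / l) * (rhoPlus (s + 2 * l) Ψ - rhoMinus (s + 2 * l) Ψ)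

noncomputable def A1 {m N : ℕ} (s l : ℕ) (Ψ : Matrix (Fin m) (Fin N) ℝ) : ℝ :=
  4 * (rhoPlus (s + 2 * l) Ψ - rhoMinus (s + 2 * l) Ψ)

namespace Stmt8Aux

def dot {n : ℕ} (a b : Fin n → ℝ) : ℝ := ∑ i, a i * b i

def rhoSet {m N : ℕ} (k : ℕ) (Ψ : Matrix (Fin m) (Fin N) ℝ) : Set ℝ :=
  {r | ∃ (T : Finset (Fin N)) (h : Fin N → ℝ), T.card ≤ k ∧ restrict T h ≠ 0 ∧
    r = l2sq (Ψ.mulVec (restrict T h)) / l2sq (restrict T h)}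

lemma rhoMinus_def {m N : ℕ} (k : ℕ) (Ψ : Matrix (Fin m) (Fin N) ℝ) :
    rhoMinus k Ψ = sInf (rhoSet k Ψ) := rfl

lemma rhoPlus_def {m N : ℕ} (k : ℕ) (Ψ : Matrix (Fin m) (Fin N) ℝ) :
    rhoPlus k Ψ = sSup (rhoSet k Ψ) := rfl

lemma l2sq_nonneg {n : ℕ} (v : Fin n → ℝ) : 0 ≤ l2sq v :=
  Finset.sum_nonneg fun _ _ => sq_nonneg _

lemma l2sq_zero {n : ℕ} : l2sq (0 : Fin n → ℝ) = 0 := by simp [l2sq]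

lemma l2sq_pos {n : ℕ} {v : Fin n → ℝ} (hv : v ≠ 0) : 0 < l2sq v := by
  rcases Function.ne_iff.mp hv with ⟨i, hi⟩
  have h1 : 0 < v i ^ 2 := by
    rcases (sq_nonneg (v i)).lt_or_eq with h | h
    · exact h
    · exact absurd (pow_eq_zero_iff two_ne_zero |>.mp h.symm) hi
  exact lt_of_lt_of_le h1 (Finset.single_le_sum (fun j _ => sq_nonneg (v j)) (Finset.mem_univ i))

lemma restrict_eq_self {N : ℕ} {T : Finset (Fin N)} {v : Fin N → ℝ}
    (hs : ∀ i, i ∉ T → v i = 0) : restrict T v = v := by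
  funext i
  simp only [restrict]
  split
  · rfl
  · rename_i hi; exact (hs i hi).symm

lemma restrict_supp {N : ℕ} (T : Finset (Fin N)) (v : Fin N → ℝ) :
    ∀ i, i ∉ T → restrict T v i = 0 := by
  intro i hi; simp [restrict, hi]

lemma bddBelow_rhoSet {m N : ℕ} (k : ℕ) (Ψ : Matrix (Fin m) (Fin N) ℝ) :
    BddBelow (rhoSet k Ψ) := by
  refine ⟨0, fun r hr => ?_⟩
  obtain ⟨T, g, _, _, rfl⟩ := hr
  exact div_nonneg (l2sq_nonneg _) (l2sq_nonneg _)

lemma mulVec_l2sq_le {m N : ℕ} (Ψ : Matrix (Fin m) (Fin N) ℝ) (w : Fin N → ℝ) :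
    l2sq (Ψ.mulVec w) ≤ (∑ i, ∑ j, Ψ i j ^ 2) * l2sq w := by
  unfold l2sq
  rw [Finset.sum_mul]
  apply Finset.sum_le_sum
  intro i _
  calc (Ψ.mulVec w i) ^ 2 = (∑ j, Ψ i j * w j) ^ 2 := by
        simp [Matrix.mulVec, dotProduct]
    _ ≤ (∑ j, Ψ i j ^ 2) * ∑ j, w j ^ 2 := Finset.sum_mul_sq_le_sq_mul_sq _ _ _

lemma bddAbove_rhoSet {m N : ℕ} (k : ℕ) (Ψ : Matrix (Fin m) (Fin N) ℝ) :
    BddAbove (rhoSet k Ψ) := by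
  refine ⟨∑ i, ∑ j, Ψ i j ^ 2, fun r hr => ?_⟩
  obtain ⟨T, g, _, hne, rfl⟩ := hr
  rw [div_le_iff₀ (l2sq_pos hne)]
  exact mulVec_l2sq_le Ψ _

lemma mem_rhoSet {m N : ℕ} {k : ℕ} (Ψ : Matrix (Fin m) (Fin N) ℝ) {T : Finset (Fin N)}
    {v : Fin N → ℝ} (hT : T.card ≤ k) (hsupp : ∀ i, i ∉ T → v i = 0) (hv : v ≠ 0) :
    l2sq (Ψ.mulVec v) / l2sq v ∈ rhoSet k Ψ := by
  have hre : restrict T v = v := restrict_eq_self hsupp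
  exact ⟨T, v, hT, by rw [hre]; exact hv, by rw [hre]⟩

lemma rhoMinus_mul_le {m N : ℕ} {k : ℕ} (Ψ : Matrix (Fin m) (Fin N) ℝ) {T : Finset (Fin N)}
    {v : Fin N → ℝ} (hT : T.card ≤ k) (hsupp : ∀ i, i ∉ T → v i = 0) :
    rhoMinus k Ψ * l2sq v ≤ l2sq (Ψ.mulVec v) := by
  by_cases hv : v = 0
  · subst hv; simp [l2sq_zero, Matrix.mulVec_zero, l2sq_nonneg]
  · have hpos := l2sq_pos hv
    have h1 : rhoMinus k Ψ ≤ l2sq (Ψ.mulVec v) / l2sq v := by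
      rw [rhoMinus_def]
      exact csInf_le (bddBelow_rhoSet k Ψ) (mem_rhoSet Ψ hT hsupp hv)
    calc rhoMinus k Ψ * l2sq v ≤ (l2sq (Ψ.mulVec v) / l2sq v) * l2sq v :=
          mul_le_mul_of_nonneg_right h1 hpos.le
      _ = l2sq (Ψ.mulVec v) := div_mul_cancel₀ _ hpos.ne'

lemma le_rhoPlus_mul {m N : ℕ} {k : ℕ} (Ψ : Matrix (Fin m) (Fin N) ℝ) {T : Finset (Fin N)}
    {v : Fin N → ℝ} (hT : T.card ≤ k) (hsupp : ∀ i, i ∉ T → v i = 0) :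
    l2sq (Ψ.mulVec v) ≤ rhoPlus k Ψ * l2sq v := by
  by_cases hv : v = 0
  · subst hv; simp [l2sq_zero, Matrix.mulVec_zero]
  · have hpos := l2sq_pos hv
    have h1 : l2sq (Ψ.mulVec v) / l2sq v ≤ rhoPlus k Ψ := by
      rw [rhoPlus_def]
      exact le_csSup (bddAbove_rhoSet k Ψ) (mem_rhoSet Ψ hT hsupp hv)
    calc l2sq (Ψ.mulVec v) = (l2sq (Ψ.mulVec v) / l2sq v) * l2sq v :=
          (div_mul_cancel₀ _ hpos.ne').symm
      _ ≤ rhoPlus k Ψ * l2sq v := mul_le_mul_of_nonneg_right h1 hpos.le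

lemma l2sq_add {n : ℕ} (a b : Fin n → ℝ) :
    l2sq (a + b) = l2sq a + 2 * dot a b + l2sq b := by
  unfold l2sq dot
  rw [Finset.mul_sum, ← Finset.sum_add_distrib, ← Finset.sum_add_distrib]
  exact Finset.sum_congr rfl fun i _ => by simp only [Pi.add_apply]; ring

lemma l2sq_sub {n : ℕ} (a b : Fin n → ℝ) :
    l2sq (a - b) = l2sq a - 2 * dot a b + l2sq b := by
  unfold l2sq dot
  rw [Finset.mul_sum, ← Finset.sum_sub_distrib, ← Finset.sum_add_distrib]
  exact Finset.sum_congr rfl fun i _ => by simp only [Pi.sub_apply]; ring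

lemma dot_disj {N : ℕ} {A B : Finset (Fin N)} {u v : Fin N → ℝ}
    (hA : ∀ i, i ∉ A → u i = 0) (hB : ∀ i, i ∉ B → v i = 0) (hdisj : Disjoint A B) :
    dot u v = 0 := by
  unfold dot
  apply Finset.sum_eq_zero
  intro i _
  by_cases hi : i ∈ A
  · rw [hB i (Finset.disjoint_left.mp hdisj hi), mul_zero]
  · rw [hA i hi, zero_mul]

lemma dot_paral_le {m N : ℕ} (Ψ : Matrix (Fin m) (Fin N) ℝ) {A B : Finset (Fin N)}
    {u v : Fin N → ℝ} {k : ℕ}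
    (hA : ∀ i, i ∉ A → u i = 0) (hB : ∀ i, i ∉ B → v i = 0)
    (hdisj : Disjoint A B) (hcard : A.card + B.card ≤ k) :
    4 * dot (Ψ.mulVec u) (Ψ.mulVec v) ≤
      (rhoPlus k Ψ - rhoMinus k Ψ) * (l2sq u + l2sq v) := by
  have hABcard : (A ∪ B).card ≤ k := le_trans (Finset.card_union_le A B) hcard
  have hsuppP : ∀ i, i ∉ A ∪ B → (u + v) i = 0 := by
    intro i hi
    rw [Finset.mem_union, not_or] at hi
    simp [hA i hi.1, hB i hi.2]
  have hsuppM : ∀ i, i ∉ A ∪ B → (u - v) i = 0 := by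
    intro i hi
    rw [Finset.mem_union, not_or] at hi
    simp [hA i hi.1, hB i hi.2]
  have hduv : dot u v = 0 := dot_disj hA hB hdisj
  have hP : l2sq (u + v) = l2sq u + l2sq v := by rw [l2sq_add, hduv]; ring
  have hM : l2sq (u - v) = l2sq u + l2sq v := by rw [l2sq_sub, hduv]; ring
  have hid : 4 * dot (Ψ.mulVec u) (Ψ.mulVec v) =
      l2sq (Ψ.mulVec (u + v)) - l2sq (Ψ.mulVec (u - v)) := by
    rw [Matrix.mulVec_add, Matrix.mulVec_sub, l2sq_add, l2sq_sub]
    ring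
  have hup : l2sq (Ψ.mulVec (u + v)) ≤ rhoPlus k Ψ * (l2sq u + l2sq v) := by
    rw [← hP]; exact le_rhoPlus_mul Ψ hABcard hsuppP
  have hlo : rhoMinus k Ψ * (l2sq u + l2sq v) ≤ l2sq (Ψ.mulVec (u - v)) := by
    rw [← hM]; exact rhoMinus_mul_le Ψ hABcard hsuppM
  rw [hid]
  nlinarith [hup, hlo]

lemma dot_paral_abs {m N : ℕ} (Ψ : Matrix (Fin m) (Fin N) ℝ) {A B : Finset (Fin N)}
    {u v : Fin N → ℝ} {k : ℕ}
    (hA : ∀ i, i ∉ A → u i = 0) (hB : ∀ i, i ∉ B → v i = 0)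
    (hdisj : Disjoint A B) (hcard : A.card + B.card ≤ k) :
    |dot (Ψ.mulVec u) (Ψ.mulVec v)| ≤
      (rhoPlus k Ψ - rhoMinus k Ψ) / 4 * (l2sq u + l2sq v) := by
  have h1 := dot_paral_le Ψ hA hB hdisj hcard
  have hB' : ∀ i, i ∉ B → (-v) i = 0 := fun i hi => by simp [hB i hi]
  have h2 := dot_paral_le Ψ hA hB' hdisj hcard
  have hneg : dot (Ψ.mulVec u) (Ψ.mulVec (-v)) = -dot (Ψ.mulVec u) (Ψ.mulVec v) := by
    rw [Matrix.mulVec_neg]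
    unfold dot
    simp
  have hl2 : l2sq (-v) = l2sq v := by unfold l2sq; simp
  rw [hneg, hl2] at h2
  rw [abs_le]
  constructor <;> nlinarith [h1, h2]

lemma l2sq_smul {n : ℕ} (c : ℝ) (v : Fin n → ℝ) : l2sq (c • v) = c ^ 2 * l2sq v := by
  unfold l2sq
  rw [Finset.mul_sum]
  exact Finset.sum_congr rfl fun i _ => by simp [smul_eq_mul]; ring

lemma cross_bound {m N : ℕ} (Ψ : Matrix (Fin m) (Fin N) ℝ) {A B : Finset (Fin N)}
    {u v : Fin N → ℝ} {k : ℕ}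
    (hA : ∀ i, i ∉ A → u i = 0) (hB : ∀ i, i ∉ B → v i = 0)
    (hdisj : Disjoint A B) (hcard : A.card + B.card ≤ k) :
    |dot (Ψ.mulVec u) (Ψ.mulVec v)| ≤
      (rhoPlus k Ψ - rhoMinus k Ψ) / 2 * Real.sqrt (l2sq u) * Real.sqrt (l2sq v) := by
  by_cases hu : u = 0
  · subst hu
    simp [Matrix.mulVec_zero, dot, l2sq_zero]
  by_cases hv : v = 0
  · subst hv
    simp [Matrix.mulVec_zero, dot, l2sq_zero]
  have hU := l2sq_pos hu
  have hV := l2sq_pos hv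
  set sU : ℝ := Real.sqrt (l2sq u) with hsU_def
  set sV : ℝ := Real.sqrt (l2sq v) with hsV_def
  have hsU : 0 < sU := Real.sqrt_pos.mpr hU
  have hsV : 0 < sV := Real.sqrt_pos.mpr hV
  have hUU : sU * sU = l2sq u := Real.mul_self_sqrt hU.le
  have hVV : sV * sV = l2sq v := Real.mul_self_sqrt hV.le
  set t : ℝ := Real.sqrt (sV / sU) with ht_def
  have ht : 0 < t := Real.sqrt_pos.mpr (div_pos hsV hsU)
  have ht2 : t ^ 2 = sV / sU := Real.sq_sqrt (div_pos hsV hsU).le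
  have hA' : ∀ i, i ∉ A → (t • u) i = 0 := fun i hi => by simp [hA i hi]
  have hB' : ∀ i, i ∉ B → (t⁻¹ • v) i = 0 := fun i hi => by simp [hB i hi]
  have hkey := dot_paral_abs Ψ hA' hB' hdisj hcard
  have hl2u : l2sq (t • u) = sU * sV := by
    rw [l2sq_smul, ht2, ← hUU]
    field_simp
  have hl2v : l2sq (t⁻¹ • v) = sU * sV := by
    rw [l2sq_smul, inv_pow, ht2, ← hVV]
    field_simp
  have hdot : dot (Ψ.mulVec (t • u)) (Ψ.mulVec (t⁻¹ • v)) =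
      dot (Ψ.mulVec u) (Ψ.mulVec v) := by
    rw [Matrix.mulVec_smul, Matrix.mulVec_smul]
    unfold dot
    apply Finset.sum_congr rfl
    intro i _
    simp only [Pi.smul_apply, smul_eq_mul]
    rw [mul_mul_mul_comm, mul_inv_cancel₀ ht.ne', one_mul]
  rw [hdot, hl2u, hl2v] at hkey
  calc |dot (Ψ.mulVec u) (Ψ.mulVec v)| ≤
        (rhoPlus k Ψ - rhoMinus k Ψ) / 4 * (sU * sV + sU * sV) := hkey
    _ = (rhoPlus k Ψ - rhoMinus k Ψ) / 2 * sU * sV := by ring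

lemma l2sq_restrict {N : ℕ} (T : Finset (Fin N)) (h : Fin N → ℝ) :
    l2sq (restrict T h) = ∑ i ∈ T, h i ^ 2 := by
  unfold l2sq restrict
  rw [Finset.sum_congr rfl (fun i _ => by rw [apply_ite (· ^ 2), zero_pow two_ne_zero]),
    Finset.sum_ite_mem, Finset.univ_inter]

lemma l1Norm_restrict {N : ℕ} (T : Finset (Fin N)) (h : Fin N → ℝ) :
    l1Norm (restrict T h) = ∑ i ∈ T, |h i| := by
  unfold l1Norm restrict
  rw [Finset.sum_congr rfl (fun i _ => by rw [apply_ite abs, abs_zero]),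
    Finset.sum_ite_mem, Finset.univ_inter]

lemma l1Norm_nonneg {N : ℕ} (v : Fin N → ℝ) : 0 ≤ l1Norm v :=
  Finset.sum_nonneg fun _ _ => abs_nonneg _

lemma restrict_split {N : ℕ} {B S : Finset (Fin N)} (hBS : B ⊆ S) (h : Fin N → ℝ) :
    restrict S h = restrict B h + restrict (S \ B) h := by
  funext i
  simp only [Pi.add_apply, restrict, Finset.mem_sdiff]
  by_cases hiB : i ∈ B
  · simp [hiB, hBS hiB]
  · by_cases hiS : i ∈ S <;> simp [hiB, hiS]

lemma dot_add_right {n : ℕ} (a b c : Fin n → ℝ) : dot a (b + c) = dot a b + dot a c := by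
  unfold dot
  rw [← Finset.sum_add_distrib]
  exact Finset.sum_congr rfl fun i _ => by simp [mul_add]

lemma exists_top {N : ℕ} (f : Fin N → ℝ) :
    ∀ (l : ℕ) (S : Finset (Fin N)), l ≤ S.card →
    ∃ B, B ⊆ S ∧ B.card = l ∧ ∀ i ∈ S \ B, ∀ j ∈ B, f i ≤ f j := by
  intro l
  induction l with
  | zero => exact fun S _ => ⟨∅, Finset.empty_subset S, Finset.card_empty, by simp⟩
  | succ n ih =>
    intro S hS
    have hne : S.Nonempty := Finset.card_pos.mp (lt_of_lt_of_le (Nat.succ_pos n) hS)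
    obtain ⟨a, haS, ha⟩ := S.exists_max_image f hne
    obtain ⟨B', hB'sub, hB'card, hB'⟩ := ih (S.erase a)
      (by rw [Finset.card_erase_of_mem haS]; omega)
    have haB' : a ∉ B' := fun hc => (Finset.notMem_erase a S) (hB'sub hc)
    refine ⟨insert a B', ?_, ?_, ?_⟩
    · exact Finset.insert_subset haS (hB'sub.trans (Finset.erase_subset a S))
    · rw [Finset.card_insert_of_notMem haB', hB'card]
    · intro i hi j hj
      obtain ⟨hiS, hiB⟩ := Finset.mem_sdiff.mp hi
      rcases Finset.mem_insert.mp hj with rfl | hj'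
      · exact ha i hiS
      · refine hB' i ?_ j hj'
        refine Finset.mem_sdiff.mpr ⟨Finset.mem_erase.mpr ⟨?_, hiS⟩, fun hc => hiB (Finset.mem_insert_of_mem hc)⟩
        intro hc
        exact hiB (hc ▸ Finset.mem_insert_self a B')

lemma block_bound {m N : ℕ} (Ψ : Matrix (Fin m) (Fin N) ℝ) {s l : ℕ}
    {h : Fin N → ℝ} {T01 S : Finset (Fin N)} (hT01 : T01.card ≤ s + l)
    (hS : S.card ≤ l) (hdisj : Disjoint T01 S) {b : ℝ} (hb : 0 ≤ b)
    (hSb : ∀ i ∈ S, |h i| ≤ b)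
    (hD : 0 ≤ rhoPlus (s + 2 * l) Ψ - rhoMinus (s + 2 * l) Ψ) :
    |dot (Ψ.mulVec (restrict T01 h)) (Ψ.mulVec (restrict S h))| ≤
      (rhoPlus (s + 2 * l) Ψ - rhoMinus (s + 2 * l) Ψ) / 2 *
        Real.sqrt (l2sq (restrict T01 h)) * (Real.sqrt l * b) := by
  have hcard : T01.card + S.card ≤ s + 2 * l := by omega
  have hcb := cross_bound Ψ (restrict_supp T01 h) (restrict_supp S h) hdisj hcard
  have h1 : l2sq (restrict S h) ≤ (l : ℝ) * b ^ 2 := by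
    rw [l2sq_restrict]
    calc ∑ i ∈ S, h i ^ 2 ≤ ∑ _i ∈ S, b ^ 2 := by
          apply Finset.sum_le_sum
          intro i hi
          rw [← sq_abs]
          exact pow_le_pow_left₀ (abs_nonneg _) (hSb i hi) 2
      _ = (S.card : ℝ) * b ^ 2 := by rw [Finset.sum_const, nsmul_eq_mul]
      _ ≤ (l : ℝ) * b ^ 2 := by
          apply mul_le_mul_of_nonneg_right _ (sq_nonneg b)
          exact_mod_cast hS
  have h2 : Real.sqrt (l2sq (restrict S h)) ≤ Real.sqrt l * b := by
    rw [← Real.sqrt_sq hb, ← Real.sqrt_mul (Nat.cast_nonneg l)]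
    exact Real.sqrt_le_sqrt h1
  refine hcb.trans ?_
  apply mul_le_mul_of_nonneg_left h2
  exact mul_nonneg (by linarith) (Real.sqrt_nonneg _)

lemma cross_sum {m N : ℕ} (Ψ : Matrix (Fin m) (Fin N) ℝ) (s l : ℕ) (hl : 1 ≤ l)
    (h : Fin N → ℝ) (T01 : Finset (Fin N)) (hT01 : T01.card ≤ s + l)
    (hD : 0 ≤ rhoPlus (s + 2 * l) Ψ - rhoMinus (s + 2 * l) Ψ) :
    ∀ (n : ℕ) (S : Finset (Fin N)), S.card ≤ n → Disjoint T01 S →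
    ∀ b : ℝ, 0 ≤ b → (∀ i ∈ S, |h i| ≤ b) →
    |dot (Ψ.mulVec (restrict T01 h)) (Ψ.mulVec (restrict S h))| ≤
      (rhoPlus (s + 2 * l) Ψ - rhoMinus (s + 2 * l) Ψ) / 2 *
        Real.sqrt (l2sq (restrict T01 h)) *
        (Real.sqrt l * b + l1Norm (restrict S h) / Real.sqrt l) := by
  have hl0 : (0:ℝ) < l := by exact_mod_cast hl
  have hslpos : 0 < Real.sqrt l := Real.sqrt_pos.mpr hl0
  have hsmall : ∀ (S : Finset (Fin N)), S.card ≤ l → Disjoint T01 S →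
      ∀ b : ℝ, 0 ≤ b → (∀ i ∈ S, |h i| ≤ b) →
      |dot (Ψ.mulVec (restrict T01 h)) (Ψ.mulVec (restrict S h))| ≤
        (rhoPlus (s + 2 * l) Ψ - rhoMinus (s + 2 * l) Ψ) / 2 *
          Real.sqrt (l2sq (restrict T01 h)) *
          (Real.sqrt l * b + l1Norm (restrict S h) / Real.sqrt l) := by
    intro S hSl hdisj b hb hSb
    have hbig := block_bound Ψ hT01 hSl hdisj hb hSb hD
    have hnn : 0 ≤ (rhoPlus (s + 2 * l) Ψ - rhoMinus (s + 2 * l) Ψ) / 2 *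
        Real.sqrt (l2sq (restrict T01 h)) := mul_nonneg (by linarith) (Real.sqrt_nonneg _)
    have hnn2 : 0 ≤ (rhoPlus (s + 2 * l) Ψ - rhoMinus (s + 2 * l) Ψ) / 2 *
        Real.sqrt (l2sq (restrict T01 h)) * (l1Norm (restrict S h) / Real.sqrt l) :=
      mul_nonneg hnn (div_nonneg (l1Norm_nonneg _) hslpos.le)
    calc |dot (Ψ.mulVec (restrict T01 h)) (Ψ.mulVec (restrict S h))| ≤
          (rhoPlus (s + 2 * l) Ψ - rhoMinus (s + 2 * l) Ψ) / 2 *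
            Real.sqrt (l2sq (restrict T01 h)) * (Real.sqrt l * b) := hbig
      _ ≤ _ := by rw [mul_add]; linarith
  intro n
  induction n with
  | zero =>
    intro S hS hdisj b hb hSb
    exact hsmall S (le_trans hS (by omega)) hdisj b hb hSb
  | succ n ih =>
    intro S hS hdisj b hb hSb
    by_cases hSl : S.card ≤ l
    · exact hsmall S hSl hdisj b hb hSb
    · push_neg at hSl
      obtain ⟨B, hBsub, hBcard, htop⟩ := exists_top (fun i => |h i|) l S hSl.le
      have hBne : B.Nonempty := Finset.card_pos.mp (by omega)
      obtain ⟨j₀, hj₀, hmin⟩ := B.exists_min_image (fun i => |h i|) hBne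
      have hb' : 0 ≤ |h j₀| := abs_nonneg _
      have hSBb : ∀ i ∈ S \ B, |h i| ≤ |h j₀| := fun i hi => htop i hi j₀ hj₀
      have hlb' : (l : ℝ) * |h j₀| ≤ l1Norm (restrict B h) := by
        rw [l1Norm_restrict]
        have := Finset.card_nsmul_le_sum B (fun i => |h i|) (|h j₀|) (fun i hi => hmin i hi)
        rw [hBcard, nsmul_eq_mul] at this
        exact this
      have hsplit : restrict S h = restrict B h + restrict (S \ B) h := restrict_split hBsub h
      have hdot : dot (Ψ.mulVec (restrict T01 h)) (Ψ.mulVec (restrict S h)) =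
          dot (Ψ.mulVec (restrict T01 h)) (Ψ.mulVec (restrict B h)) +
          dot (Ψ.mulVec (restrict T01 h)) (Ψ.mulVec (restrict (S \ B) h)) := by
        rw [hsplit, Matrix.mulVec_add, dot_add_right]
      have hdisjB : Disjoint T01 B := Finset.disjoint_of_subset_right hBsub hdisj
      have hbound1 := block_bound Ψ hT01 (le_of_eq hBcard) hdisjB hb
        (fun i hi => hSb i (hBsub hi)) hD
      have hbound2 := ih (S \ B)
        (by rw [Finset.card_sdiff_of_subset hBsub, hBcard]; omega)
        (Finset.disjoint_of_subset_right (Finset.sdiff_subset) hdisj) (|h j₀|) hb' hSBb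
      have hterm : Real.sqrt l * |h j₀| ≤ l1Norm (restrict B h) / Real.sqrt l := by
        rw [le_div_iff₀ hslpos]
        calc Real.sqrt l * |h j₀| * Real.sqrt l = (Real.sqrt l * Real.sqrt l) * |h j₀| := by
              ring
          _ = (l : ℝ) * |h j₀| := by rw [Real.mul_self_sqrt (Nat.cast_nonneg l)]
          _ ≤ _ := hlb'
      have hl1 : l1Norm (restrict B h) + l1Norm (restrict (S \ B) h) =
          l1Norm (restrict S h) := by
        rw [l1Norm_restrict, l1Norm_restrict, l1Norm_restrict, add_comm]
        exact Finset.sum_sdiff hBsub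
      have hnn : 0 ≤ (rhoPlus (s + 2 * l) Ψ - rhoMinus (s + 2 * l) Ψ) / 2 *
          Real.sqrt (l2sq (restrict T01 h)) := mul_nonneg (by linarith) (Real.sqrt_nonneg _)
      calc |dot (Ψ.mulVec (restrict T01 h)) (Ψ.mulVec (restrict S h))| ≤
            |dot (Ψ.mulVec (restrict T01 h)) (Ψ.mulVec (restrict B h))| +
            |dot (Ψ.mulVec (restrict T01 h)) (Ψ.mulVec (restrict (S \ B) h))| := by
            rw [hdot]; exact abs_add_le _ _
        _ ≤ (rhoPlus (s + 2 * l) Ψ - rhoMinus (s + 2 * l) Ψ) / 2 *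
              Real.sqrt (l2sq (restrict T01 h)) * (Real.sqrt l * b) +
            (rhoPlus (s + 2 * l) Ψ - rhoMinus (s + 2 * l) Ψ) / 2 *
              Real.sqrt (l2sq (restrict T01 h)) *
              (Real.sqrt l * |h j₀| + l1Norm (restrict (S \ B) h) / Real.sqrt l) :=
            add_le_add hbound1 hbound2
        _ ≤ (rhoPlus (s + 2 * l) Ψ - rhoMinus (s + 2 * l) Ψ) / 2 *
              Real.sqrt (l2sq (restrict T01 h)) * (Real.sqrt l * b) +
            (rhoPlus (s + 2 * l) Ψ - rhoMinus (s + 2 * l) Ψ) / 2 *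
              Real.sqrt (l2sq (restrict T01 h)) *
              (l1Norm (restrict B h) / Real.sqrt l +
                l1Norm (restrict (S \ B) h) / Real.sqrt l) := by
            refine add_le_add le_rfl (mul_le_mul_of_nonneg_left ?_ hnn)
            linarith
        _ = (rhoPlus (s + 2 * l) Ψ - rhoMinus (s + 2 * l) Ψ) / 2 *
              Real.sqrt (l2sq (restrict T01 h)) *
              (Real.sqrt l * b + l1Norm (restrict S h) / Real.sqrt l) := by
            rw [← hl1, add_div]; ring

end Stmt8Aux

open Stmt8Aux in
theorem stmt8 {m N : ℕ} (Ψ : Matrix (Fin m) (Fin N) ℝ) (s l : ℕ) (hs : 1 ≤ s) (hl : 1 ≤ l)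
    (h xstar : Fin N → ℝ) (T₀ T₁ : Finset (Fin N))
    (hT₀ : T₀.card = s) (hT₁sub : T₁ ⊆ T₀ᶜ) (hT₁card : T₁.card = l)
    (hlargest : ∀ i ∈ T₀ᶜ \ T₁, ∀ i' ∈ T₁, |h i| ≤ |h i'|)
    (hcone : l1Norm (restrict T₀ᶜ h) ≤ 3 * l1Norm (restrict T₀ h) + 4 * l1Norm (restrict T₀ᶜ xstar)) :
    A0 s l Ψ * l2sq (restrict (T₀ ∪ T₁) h) -
      A1 s l Ψ * l2Norm (restrict (T₀ ∪ T₁) h) * l1Norm (restrict T₀ᶜ xstar) / Real.sqrt l ≤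
    l2sq (Ψ.mulVec h) := by
  classical
  have hl0 : (0:ℝ) < l := by exact_mod_cast hl
  have hslpos : 0 < Real.sqrt l := Real.sqrt_pos.mpr hl0
  -- D ≥ 0
  have hT₀ne : T₀.Nonempty := Finset.card_pos.mp (by omega)
  obtain ⟨i₀, hi₀⟩ := hT₀ne
  have hD : 0 ≤ rhoPlus (s + 2 * l) Ψ - rhoMinus (s + 2 * l) Ψ := by
    have hv : restrict {i₀} (fun _ => (1:ℝ)) ≠ 0 := by
      intro hc
      have := congrFun hc i₀
      simp [restrict] at this
    have hmem : l2sq (Ψ.mulVec (restrict {i₀} (fun _ => (1:ℝ)))) /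
        l2sq (restrict {i₀} (fun _ => (1:ℝ))) ∈ rhoSet (s + 2 * l) Ψ :=
      mem_rhoSet Ψ (by rw [Finset.card_singleton]; omega) (restrict_supp _ _) hv
    have h1 : rhoMinus (s + 2 * l) Ψ ≤ l2sq (Ψ.mulVec (restrict {i₀} (fun _ => (1:ℝ)))) /
        l2sq (restrict {i₀} (fun _ => (1:ℝ))) := by
      rw [rhoMinus_def]; exact csInf_le (bddBelow_rhoSet _ _) hmem
    have h2 : l2sq (Ψ.mulVec (restrict {i₀} (fun _ => (1:ℝ)))) /
        l2sq (restrict {i₀} (fun _ => (1:ℝ))) ≤ rhoPlus (s + 2 * l) Ψ := by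
      rw [rhoPlus_def]; exact le_csSup (bddAbove_rhoSet _ _) hmem
    linarith [h1.trans h2]
  -- decomposition
  have hdecomp : restrict (T₀ ∪ T₁) h + restrict (T₀ᶜ \ T₁) h = h := by
    funext i
    simp only [Pi.add_apply, restrict, Finset.mem_sdiff, Finset.mem_union, Finset.mem_compl]
    by_cases h0 : i ∈ T₀
    · simp [h0]
    · by_cases h1 : i ∈ T₁ <;> simp [h0, h1]
  have hl1T : l1Norm (restrict T₁ h) + l1Norm (restrict (T₀ᶜ \ T₁) h) =
      l1Norm (restrict T₀ᶜ h) := by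
    rw [l1Norm_restrict, l1Norm_restrict, l1Norm_restrict, add_comm]
    exact Finset.sum_sdiff hT₁sub
  have hT01card : (T₀ ∪ T₁).card ≤ s + l :=
    le_trans (Finset.card_union_le _ _) (by omega)
  set S := T₀ᶜ \ T₁ with hS_def
  set u := restrict (T₀ ∪ T₁) h with hu_def
  set w := restrict S h with hw_def
  set nU := Real.sqrt (l2sq u) with hnU_def
  have hnUnn : 0 ≤ nU := Real.sqrt_nonneg _
  have hmul : Ψ.mulVec h = Ψ.mulVec u + Ψ.mulVec w := by
    rw [← Matrix.mulVec_add, hdecomp]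
  have hsplit : l2sq (Ψ.mulVec h) =
      l2sq (Ψ.mulVec u) + 2 * dot (Ψ.mulVec u) (Ψ.mulVec w) + l2sq (Ψ.mulVec w) := by
    rw [hmul, l2sq_add]
  have hlow : rhoMinus (s + l) Ψ * l2sq u ≤ l2sq (Ψ.mulVec u) :=
    rhoMinus_mul_le Ψ hT01card (restrict_supp _ _)
  -- min over T₁
  have hT₁ne : T₁.Nonempty := Finset.card_pos.mp (by omega)
  obtain ⟨j₁, hj₁, hminT₁⟩ := T₁.exists_min_image (fun i => |h i|) hT₁ne
  have hSb : ∀ i ∈ S, |h i| ≤ |h j₁| := fun i hi => hlargest i hi j₁ hj₁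
  have hdisj : Disjoint (T₀ ∪ T₁) S := by
    rw [Finset.disjoint_union_left]
    exact ⟨Finset.disjoint_of_subset_right Finset.sdiff_subset disjoint_compl_right,
      Finset.disjoint_sdiff⟩
  have hcross := cross_sum Ψ s l hl h (T₀ ∪ T₁) hT01card hD S.card S le_rfl hdisj
    (|h j₁|) (abs_nonneg _) hSb
  have hlb : (l : ℝ) * |h j₁| ≤ l1Norm (restrict T₁ h) := by
    rw [l1Norm_restrict]
    have := Finset.card_nsmul_le_sum T₁ (fun i => |h i|) (|h j₁|) (fun i hi => hminT₁ i hi)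
    rw [hT₁card, nsmul_eq_mul] at this
    exact this
  have hterm : Real.sqrt l * |h j₁| ≤ l1Norm (restrict T₁ h) / Real.sqrt l := by
    rw [le_div_iff₀ hslpos]
    calc Real.sqrt l * |h j₁| * Real.sqrt l = (Real.sqrt l * Real.sqrt l) * |h j₁| := by ring
      _ = (l : ℝ) * |h j₁| := by rw [Real.mul_self_sqrt (Nat.cast_nonneg l)]
      _ ≤ _ := hlb
  -- Cauchy–Schwarz
  have hCS : l1Norm (restrict T₀ h) ≤ Real.sqrt s * nU := by
    have h1 : (l1Norm (restrict T₀ h)) ^ 2 ≤ (s : ℝ) * l2sq (restrict T₀ h) := by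
      rw [l1Norm_restrict, l2sq_restrict]
      calc (∑ i ∈ T₀, |h i|) ^ 2 = (∑ i ∈ T₀, 1 * |h i|) ^ 2 := by simp
        _ ≤ (∑ _i ∈ T₀, (1:ℝ) ^ 2) * (∑ i ∈ T₀, |h i| ^ 2) :=
            Finset.sum_mul_sq_le_sq_mul_sq _ _ _
        _ = (s : ℝ) * ∑ i ∈ T₀, h i ^ 2 := by simp [hT₀, sq_abs]
    have h2 : l2sq (restrict T₀ h) ≤ l2sq u := by
      rw [hu_def, l2sq_restrict, l2sq_restrict]
      exact Finset.sum_le_sum_of_subset_of_nonneg Finset.subset_union_left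
        (fun i _ _ => sq_nonneg _)
    have h3 := Real.sqrt_le_sqrt
      (h1.trans (mul_le_mul_of_nonneg_left h2 (Nat.cast_nonneg s)))
    rwa [Real.sqrt_sq (l1Norm_nonneg _), Real.sqrt_mul (Nat.cast_nonneg s)] at h3
  set X := l1Norm (restrict T₀ᶜ xstar) with hX_def
  have hX : 0 ≤ X := l1Norm_nonneg _
  have hDnU : 0 ≤ (rhoPlus (s + 2 * l) Ψ - rhoMinus (s + 2 * l) Ψ) / 2 * nU :=
    mul_nonneg (by linarith) hnUnn
  have hchain : Real.sqrt l * |h j₁| + l1Norm w / Real.sqrt l ≤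
      (3 * (Real.sqrt s * nU) + 4 * X) / Real.sqrt l := by
    have e1 : Real.sqrt l * |h j₁| + l1Norm w / Real.sqrt l ≤
        (l1Norm (restrict T₁ h) + l1Norm w) / Real.sqrt l := by
      rw [add_div]; exact add_le_add hterm le_rfl
    rw [hl1T] at e1
    refine e1.trans ?_
    have hnum : l1Norm (restrict T₀ᶜ h) ≤ 3 * (Real.sqrt s * nU) + 4 * X := by
      calc l1Norm (restrict T₀ᶜ h) ≤ 3 * l1Norm (restrict T₀ h) + 4 * X := hcone
        _ ≤ _ := by linarith [hCS]
    exact div_le_div_of_nonneg_right hnum hslpos.le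
  have hfinal : |dot (Ψ.mulVec u) (Ψ.mulVec w)| ≤
      (rhoPlus (s + 2 * l) Ψ - rhoMinus (s + 2 * l) Ψ) / 2 * nU *
        ((3 * (Real.sqrt s * nU) + 4 * X) / Real.sqrt l) :=
    hcross.trans (mul_le_mul_of_nonneg_left hchain hDnU)
  have hsq' : Real.sqrt ((s : ℝ) / l) = Real.sqrt s / Real.sqrt l := by
    rw [eq_div_iff hslpos.ne', ← Real.sqrt_mul (by positivity), div_mul_cancel₀]
    exact hl0.ne'
  have hU : l2sq u = nU * nU := (Real.mul_self_sqrt (l2sq_nonneg u)).symm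
  have hwnn : 0 ≤ l2sq (Ψ.mulVec w) := l2sq_nonneg _
  have habs := neg_abs_le (dot (Ψ.mulVec u) (Ψ.mulVec w))
  have hkey : 2 * ((rhoPlus (s + 2 * l) Ψ - rhoMinus (s + 2 * l) Ψ) / 2 * nU *
        ((3 * (Real.sqrt s * nU) + 4 * X) / Real.sqrt l)) =
      3 * Real.sqrt ((s : ℝ) / l) * (rhoPlus (s + 2 * l) Ψ - rhoMinus (s + 2 * l) Ψ) *
        (nU * nU) +
      4 * (rhoPlus (s + 2 * l) Ψ - rhoMinus (s + 2 * l) Ψ) * nU * X / Real.sqrt l := by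
    rw [hsq']
    field_simp
  have hA0 : A0 s l Ψ = rhoMinus (s + l) Ψ -
      3 * Real.sqrt ((s : ℝ) / l) * (rhoPlus (s + 2 * l) Ψ - rhoMinus (s + 2 * l) Ψ) := rfl
  have hA1 : A1 s l Ψ = 4 * (rhoPlus (s + 2 * l) Ψ - rhoMinus (s + 2 * l) Ψ) := rfl
  have hl2N : l2Norm u = nU := rfl
  rw [hU] at hlow
  rw [hA0, hA1, hl2N, hU]
  linarith [hsplit, hlow, hwnn, hfinal, habs, hkey]
end

section
/- Main error bound (ℓ₂-term): Assume ‖Φ̃ᵀ(Φ̃x* − ỹ)‖∞ ≤ λΔ/2, let x̂ solve the constrained LASSO min (1/2)‖Φ̃x − ỹ‖² + λΔ‖x‖₁ subject to ‖Φ̃x − ỹ‖∞ ≤ Δ/2 and affine saturation constraints satisfied by x*, and set h = x̂ − x*. For integers s, l and any T₀ with |T₀| = s, if A₀(Φ̃) > 0, then ‖h‖₂ ≤ 6C₂(Φ̃)²√s λΔ/√(1+9s/l) + (C₁(Φ̃)/√l)‖x*_{T₀ᶜ}‖₁ + 2.5 C₂(Φ̃)·sqrt(λΔ‖x*_{T₀ᶜ}‖₁).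 -/
noncomputable def linfNorm {m : ℕ} (v : Fin m → ℝ) : ℝ := ⨆ i, |v i|

noncomputable def C1 {m N : ℕ} (s l : ℕ) (Ψ : Matrix (Fin m) (Fin N) ℝ) : ℝ :=
  4 + Real.sqrt (1 + 9 * (s : ℝ) / l) * A1 s l Ψ / A0 s l Ψ

noncomputable def C2 {m N : ℕ} (s l : ℕ) (Ψ : Matrix (Fin m) (Fin N) ℝ) : ℝ :=
  Real.sqrt ((1 + 9 * (s : ℝ) / l) / A0 s l Ψ)

noncomputable def lassoObj {Mt N : ℕ} (Φ : Matrix (Fin Mt) (Fin N) ℝ) (y : Fin Mt → ℝ)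
    (lam Δ : ℝ) (x : Fin N → ℝ) : ℝ :=
  (1 / 2) * l2sq (Φ.mulVec x - y) + lam * Δ * l1Norm x

/-- Feasible set: ℓ∞ quantization constraint plus affine saturation constraints. -/
def feasible {Mt Mb N : ℕ} (Φt : Matrix (Fin Mt) (Fin N) ℝ) (yt : Fin Mt → ℝ)
    (Φb : Matrix (Fin Mb) (Fin N) ℝ) (yb : Fin Mb → ℝ) (Δ : ℝ) : Set (Fin N → ℝ) :=
  {x | (∀ i, |(Φt.mulVec x - yt) i| ≤ Δ / 2) ∧ ∀ i, yb i ≤ Φb.mulVec x i}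

section Aux

variable {m N : ℕ}

lemma l2sq_nonneg (v : Fin m → ℝ) : 0 ≤ l2sq v :=
  Finset.sum_nonneg fun i _ => sq_nonneg _

lemma l2sq_pos {v : Fin m → ℝ} (hv : v ≠ 0) : 0 < l2sq v := by
  obtain ⟨i, hi⟩ := Function.ne_iff.mp hv
  have h1 : 0 < v i ^ 2 := pow_two_pos_of_ne_zero (by simpa using hi)
  exact lt_of_lt_of_le h1 (Finset.single_le_sum (fun j _ => sq_nonneg (v j)) (Finset.mem_univ i))

lemma l2Norm_eq (v : Fin m → ℝ) : l2Norm v = Real.sqrt (l2sq v) := rfl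

lemma restrict_restrict (T : Finset (Fin N)) (h : Fin N → ℝ) :
    restrict T (restrict T h) = restrict T h := by
  funext i; simp [restrict]; intro hi; simp [hi]

lemma l2sq_restrict (T : Finset (Fin N)) (h : Fin N → ℝ) :
    l2sq (restrict T h) = ∑ i ∈ T, h i ^ 2 := by
  unfold l2sq restrict
  have e : ∀ i, (if i ∈ T then h i else 0)^2 = if i ∈ T then h i ^ 2 else 0 := by
    intro i; split <;> simp
  simp_rw [e, Finset.sum_ite_mem, Finset.univ_inter]

lemma l1Norm_restrict (T : Finset (Fin N)) (h : Fin N → ℝ) :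
    l1Norm (restrict T h) = ∑ i ∈ T, |h i| := by
  unfold l1Norm restrict
  have e : ∀ i, |if i ∈ T then h i else 0| = if i ∈ T then |h i| else 0 := by
    intro i; split <;> simp
  simp_rw [e, Finset.sum_ite_mem, Finset.univ_inter]

lemma restrict_add_compl (T : Finset (Fin N)) (h : Fin N → ℝ) :
    restrict T h + restrict Tᶜ h = h := by
  funext i; by_cases hi : i ∈ T <;> simp [restrict, hi]

lemma restrict_union (A B : Finset (Fin N)) (hd : Disjoint A B) (h : Fin N → ℝ) :
    restrict (A ∪ B) h = restrict A h + restrict B h := by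
  funext i
  by_cases hA : i ∈ A
  · have hB : i ∉ B := Finset.disjoint_left.mp hd hA
    simp [restrict, hA, hB]
  · by_cases hB : i ∈ B <;> simp [restrict, hA, hB]

end Aux
section Aux2

open Matrix

variable {m N : ℕ}

def dotR {m : ℕ} (u v : Fin m → ℝ) : ℝ := ∑ i, u i * v i

lemma l2sq_add (u v : Fin m → ℝ) : l2sq (u + v) = l2sq u + 2 * dotR u v + l2sq v := by
  unfold l2sq dotR
  rw [Finset.mul_sum, ← Finset.sum_add_distrib, ← Finset.sum_add_distrib]
  exact Finset.sum_congr rfl fun i _ => by simp only [Pi.add_apply]; ring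

lemma l2sq_sub (u v : Fin m → ℝ) : l2sq (u - v) = l2sq u - 2 * dotR u v + l2sq v := by
  have h := l2sq_add u (-v)
  have h1 : u + -v = u - v := by funext i; simp [sub_eq_add_neg]
  have h2 : l2sq (-v) = l2sq v := by
    unfold l2sq; exact Finset.sum_congr rfl fun i _ => by simp
  have h3 : dotR u (-v) = - dotR u v := by
    unfold dotR; rw [← Finset.sum_neg_distrib]; exact Finset.sum_congr rfl fun i _ => by simp [Pi.neg_apply]
  rw [h1, h2, h3] at h; linarith

lemma dotR_transpose (Φ : Matrix (Fin m) (Fin N) ℝ) (w : Fin m → ℝ) (x : Fin N → ℝ) :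
    dotR w (Φ.mulVec x) = dotR (Φ.transpose.mulVec w) x := by
  show w ⬝ᵥ Φ.mulVec x = Φ.transpose.mulVec w ⬝ᵥ x
  rw [Matrix.dotProduct_mulVec, Matrix.mulVec_transpose]

lemma frobenius_bound (Φ : Matrix (Fin m) (Fin N) ℝ) (v : Fin N → ℝ) :
    l2sq (Φ.mulVec v) ≤ (∑ i, ∑ j, Φ i j ^ 2) * l2sq v := by
  unfold l2sq
  rw [Finset.sum_mul]
  apply Finset.sum_le_sum
  intro i _
  have e : Φ.mulVec v i = ∑ j, Φ i j * v j := rfl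
  rw [e]
  exact Finset.sum_mul_sq_le_sq_mul_sq Finset.univ _ _

end Aux2
section Aux3

variable {m N : ℕ}

def rhoSet (k : ℕ) (Φ : Matrix (Fin m) (Fin N) ℝ) : Set ℝ :=
  {r | ∃ (T : Finset (Fin N)) (h : Fin N → ℝ), T.card ≤ k ∧ restrict T h ≠ 0 ∧
    r = l2sq (Φ.mulVec (restrict T h)) / l2sq (restrict T h)}

lemma rhoMinus_eq (k : ℕ) (Φ : Matrix (Fin m) (Fin N) ℝ) :
    rhoMinus k Φ = sInf (rhoSet k Φ) := rfl

lemma rhoPlus_eq (k : ℕ) (Φ : Matrix (Fin m) (Fin N) ℝ) :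
    rhoPlus k Φ = sSup (rhoSet k Φ) := rfl

lemma rhoSet_bddBelow (k : ℕ) (Φ : Matrix (Fin m) (Fin N) ℝ) : BddBelow (rhoSet k Φ) := by
  refine ⟨0, fun r hr => ?_⟩
  obtain ⟨T, h, _, _, rfl⟩ := hr
  exact div_nonneg (l2sq_nonneg _) (l2sq_nonneg _)

lemma rhoSet_bddAbove (k : ℕ) (Φ : Matrix (Fin m) (Fin N) ℝ) : BddAbove (rhoSet k Φ) := by
  refine ⟨∑ i, ∑ j, Φ i j ^ 2, fun r hr => ?_⟩
  obtain ⟨T, h, _, hne, rfl⟩ := hr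
  rw [div_le_iff₀ (l2sq_pos hne)]
  exact frobenius_bound Φ _

lemma ratio_mem {k : ℕ} {Φ : Matrix (Fin m) (Fin N) ℝ} {T : Finset (Fin N)} {v : Fin N → ℝ}
    (hT : T.card ≤ k) (hv : restrict T v = v) (hne : v ≠ 0) :
    l2sq (Φ.mulVec v) / l2sq v ∈ rhoSet k Φ := by
  exact ⟨T, v, hT, by rw [hv]; exact hne, by rw [hv]⟩

lemma rhoMinus_mul_le {k : ℕ} {Φ : Matrix (Fin m) (Fin N) ℝ} {T : Finset (Fin N)}
    {v : Fin N → ℝ} (hT : T.card ≤ k) (hv : restrict T v = v) :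
    rhoMinus k Φ * l2sq v ≤ l2sq (Φ.mulVec v) := by
  by_cases hne : v = 0
  · subst hne
    simp [Matrix.mulVec_zero]
    have : l2sq (0 : Fin N → ℝ) = 0 := by simp [l2sq]
    rw [this, mul_zero]
    exact l2sq_nonneg _
  · have hmem := ratio_mem (Φ := Φ) hT hv hne
    have hle : rhoMinus k Φ ≤ l2sq (Φ.mulVec v) / l2sq v :=
      csInf_le (rhoSet_bddBelow k Φ) hmem
    have hpos := l2sq_pos hne
    calc rhoMinus k Φ * l2sq v ≤ (l2sq (Φ.mulVec v) / l2sq v) * l2sq v :=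
          mul_le_mul_of_nonneg_right hle hpos.le
      _ = l2sq (Φ.mulVec v) := by field_simp

lemma le_rhoPlus_mul {k : ℕ} {Φ : Matrix (Fin m) (Fin N) ℝ} {T : Finset (Fin N)}
    {v : Fin N → ℝ} (hT : T.card ≤ k) (hv : restrict T v = v) :
    l2sq (Φ.mulVec v) ≤ rhoPlus k Φ * l2sq v := by
  by_cases hne : v = 0
  · subst hne
    have h0 : Φ.mulVec (0 : Fin N → ℝ) = 0 := Matrix.mulVec_zero Φ
    have h1 : l2sq (0 : Fin m → ℝ) = 0 := by simp [l2sq]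
    have h2 : l2sq (0 : Fin N → ℝ) = 0 := by simp [l2sq]
    rw [h0, h1, h2, mul_zero]
  · have hmem := ratio_mem (Φ := Φ) hT hv hne
    have hle : l2sq (Φ.mulVec v) / l2sq v ≤ rhoPlus k Φ :=
      le_csSup (rhoSet_bddAbove k Φ) hmem
    have hpos := l2sq_pos hne
    calc l2sq (Φ.mulVec v) = (l2sq (Φ.mulVec v) / l2sq v) * l2sq v := by field_simp
      _ ≤ rhoPlus k Φ * l2sq v := mul_le_mul_of_nonneg_right hle hpos.le

lemma rhoMinus_le_rhoPlus {k : ℕ} {Φ : Matrix (Fin m) (Fin N) ℝ} (hk : 1 ≤ k) (hN : 0 < N) :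
    rhoMinus k Φ ≤ rhoPlus k Φ := by
  have i0 : Fin N := ⟨0, hN⟩
  set v : Fin N → ℝ := fun j => if j = i0 then 1 else 0 with hv
  have hres : restrict {i0} v = v := by
    funext j; by_cases hj : j = i0 <;> simp [restrict, hj, hv]
  have hne : v ≠ 0 := by
    intro h0
    have := congrFun h0 i0
    simp [hv] at this
  have hcard : ({i0} : Finset (Fin N)).card ≤ k := by simpa using hk
  have hmem := ratio_mem (Φ := Φ) hcard hres hne
  exact le_trans (csInf_le (rhoSet_bddBelow k Φ) hmem) (le_csSup (rhoSet_bddAbove k Φ) hmem)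

end Aux3
section Aux4

variable {m N : ℕ}

lemma restrict_mono {A C : Finset (Fin N)} {u : Fin N → ℝ} (hu : restrict A u = u)
    (hAC : A ⊆ C) : restrict C u = u := by
  funext i
  by_cases hiC : i ∈ C
  · simp [restrict, hiC]
  · have hiA : i ∉ A := fun h => hiC (hAC h)
    have := congrFun hu i
    simp [restrict, hiA] at this
    simp [restrict, hiC, ← this]

lemma support_zero_outside {A : Finset (Fin N)} {u : Fin N → ℝ} (hu : restrict A u = u)
    {i : Fin N} (hi : i ∉ A) : u i = 0 := by
  have := congrFun hu i
  simp [restrict, hi] at this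
  exact this.symm

lemma dotR_disjoint {A B : Finset (Fin N)} {u v : Fin N → ℝ} (hu : restrict A u = u)
    (hv : restrict B v = v) (hd : Disjoint A B) : dotR u v = 0 := by
  unfold dotR
  apply Finset.sum_eq_zero
  intro i _
  by_cases hiA : i ∈ A
  · have hiB : i ∉ B := Finset.disjoint_left.mp hd hiA
    rw [support_zero_outside hv hiB, mul_zero]
  · rw [support_zero_outside hu hiA, zero_mul]

lemma restrict_smul (A : Finset (Fin N)) (c : ℝ) (u : Fin N → ℝ) :
    restrict A (c • u) = c • restrict A u := by
  funext i; by_cases hi : i ∈ A <;> simp [restrict, hi]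

lemma l2sq_smul (c : ℝ) (u : Fin N → ℝ) : l2sq (c • u) = c ^ 2 * l2sq u := by
  unfold l2sq; rw [Finset.mul_sum]; exact Finset.sum_congr rfl fun i _ => by simp; ring

lemma cross_unnormalized {k : ℕ} {Φ : Matrix (Fin m) (Fin N) ℝ} {A B : Finset (Fin N)}
    {u v : Fin N → ℝ} (hu : restrict A u = u) (hv : restrict B v = v) (hd : Disjoint A B)
    (hk : A.card + B.card ≤ k) :
    |dotR (Φ.mulVec u) (Φ.mulVec v)| ≤
      (rhoPlus k Φ - rhoMinus k Φ) / 4 * (l2sq u + l2sq v) := by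
  have hAB : (A ∪ B).card ≤ k := le_trans (Finset.card_union_le A B) hk
  have huAB : restrict (A ∪ B) u = u := restrict_mono hu (Finset.subset_union_left)
  have hvAB : restrict (A ∪ B) v = v := restrict_mono hv (Finset.subset_union_right)
  have hdot : dotR u v = 0 := dotR_disjoint hu hv hd
  have key : ∀ w : Fin N → ℝ, restrict B w = w → dotR u w = 0 →
      4 * dotR (Φ.mulVec u) (Φ.mulVec w) ≤ (rhoPlus k Φ - rhoMinus k Φ) * (l2sq u + l2sq w) := by
    intro w hw hdw
    have hwAB : restrict (A ∪ B) w = w := restrict_mono hw (Finset.subset_union_right)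
    have haddres : restrict (A ∪ B) (u + w) = u + w := by
      funext i; by_cases hi : i ∈ A ∪ B
      · simp [restrict, hi]
      · have h1 := support_zero_outside huAB hi
        have h2 := support_zero_outside hwAB hi
        simp [restrict, hi, h1, h2]
    have hsubres : restrict (A ∪ B) (u - w) = u - w := by
      funext i; by_cases hi : i ∈ A ∪ B
      · simp [restrict, hi]
      · have h1 := support_zero_outside huAB hi
        have h2 := support_zero_outside hwAB hi
        simp [restrict, hi, h1, h2]
    have hup : l2sq (Φ.mulVec (u + w)) ≤ rhoPlus k Φ * l2sq (u + w) :=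
      le_rhoPlus_mul hAB haddres
    have hdown : rhoMinus k Φ * l2sq (u - w) ≤ l2sq (Φ.mulVec (u - w)) :=
      rhoMinus_mul_le hAB hsubres
    have e1 : Φ.mulVec (u + w) = Φ.mulVec u + Φ.mulVec w := Matrix.mulVec_add Φ u w
    have e2 : Φ.mulVec (u - w) = Φ.mulVec u - Φ.mulVec w := Matrix.mulVec_sub Φ u w
    have e3 : l2sq (Φ.mulVec (u + w)) =
        l2sq (Φ.mulVec u) + 2 * dotR (Φ.mulVec u) (Φ.mulVec w) + l2sq (Φ.mulVec w) := by
      rw [e1]; exact l2sq_add _ _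
    have e4 : l2sq (Φ.mulVec (u - w)) =
        l2sq (Φ.mulVec u) - 2 * dotR (Φ.mulVec u) (Φ.mulVec w) + l2sq (Φ.mulVec w) := by
      rw [e2]; exact l2sq_sub _ _
    have e5 : l2sq (u + w) = l2sq u + l2sq w := by rw [l2sq_add, hdw]; ring
    have e6 : l2sq (u - w) = l2sq u + l2sq w := by rw [l2sq_sub, hdw]; ring
    rw [e3, e5] at hup
    rw [e4, e6] at hdown
    linarith
  have h1 := key v hv hdot
  have hvneg : restrict B (-v) = -v := by
    funext i
    by_cases hi : i ∈ B
    · simp [restrict, hi]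
    · simp [restrict, hi, support_zero_outside hv hi]
  have hdotneg : dotR u (-v) = 0 := by
    unfold dotR at hdot ⊢
    have e : ∀ i ∈ Finset.univ, u i * (-v) i = -(u i * v i) := fun i _ => by simp
    rw [Finset.sum_congr rfl e, Finset.sum_neg_distrib, hdot, neg_zero]
  have h2 := key (-v) hvneg hdotneg
  have e7 : Φ.mulVec (-v) = - Φ.mulVec v := Matrix.mulVec_neg v Φ
  have e8 : dotR (Φ.mulVec u) (-(Φ.mulVec v)) = - dotR (Φ.mulVec u) (Φ.mulVec v) := by
    unfold dotR; rw [← Finset.sum_neg_distrib]; exact Finset.sum_congr rfl fun i _ => by simp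
  have e9 : l2sq (-v) = l2sq v := by unfold l2sq; exact Finset.sum_congr rfl fun i _ => by simp
  rw [e7, e8, e9] at h2
  rw [abs_le]
  constructor <;> nlinarith [h1, h2]

lemma cross_normalized {k : ℕ} {Φ : Matrix (Fin m) (Fin N) ℝ} {A B : Finset (Fin N)}
    {u v : Fin N → ℝ} (hu : restrict A u = u) (hv : restrict B v = v) (hd : Disjoint A B)
    (hk : A.card + B.card ≤ k) :
    |dotR (Φ.mulVec u) (Φ.mulVec v)| ≤
      (rhoPlus k Φ - rhoMinus k Φ) / 2 * (l2Norm u * l2Norm v) := by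
  by_cases hu0 : u = 0
  · subst hu0
    have : Φ.mulVec (0 : Fin N → ℝ) = 0 := Matrix.mulVec_zero Φ
    rw [this]
    have hz : dotR (0 : Fin m → ℝ) (Φ.mulVec v) = 0 := by
      unfold dotR; exact Finset.sum_eq_zero fun i _ => by simp
    rw [hz, abs_zero]
    have : l2Norm (0 : Fin N → ℝ) = 0 := by simp [l2Norm]
    rw [this, zero_mul, mul_zero]
  by_cases hv0 : v = 0
  · subst hv0
    have : Φ.mulVec (0 : Fin N → ℝ) = 0 := Matrix.mulVec_zero Φ
    rw [this]
    have hz : dotR (Φ.mulVec u) (0 : Fin m → ℝ) = 0 := by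
      unfold dotR; exact Finset.sum_eq_zero fun i _ => by simp
    rw [hz, abs_zero]
    have : l2Norm (0 : Fin N → ℝ) = 0 := by simp [l2Norm]
    rw [this, mul_zero, mul_zero]
  · set a := l2Norm u with ha
    set b := l2Norm v with hb
    have hap : 0 < a := Real.sqrt_pos.mpr (l2sq_pos hu0)
    have hbp : 0 < b := Real.sqrt_pos.mpr (l2sq_pos hv0)
    have ha2 : a ^ 2 = l2sq u := Real.sq_sqrt (l2sq_nonneg u)
    have hb2 : b ^ 2 = l2sq v := Real.sq_sqrt (l2sq_nonneg v)
    have hu' : restrict A ((1/a) • u) = (1/a) • u := by rw [restrict_smul, hu]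
    have hv' : restrict B ((1/b) • v) = (1/b) • v := by rw [restrict_smul, hv]
    have hcross := cross_unnormalized (Φ := Φ) hu' hv' hd hk
    have eΦu : Φ.mulVec ((1/a) • u) = (1/a) • Φ.mulVec u := Matrix.mulVec_smul Φ (1/a) u
    have eΦv : Φ.mulVec ((1/b) • v) = (1/b) • Φ.mulVec v := Matrix.mulVec_smul Φ (1/b) v
    have edot : dotR ((1/a) • Φ.mulVec u) ((1/b) • Φ.mulVec v)
        = (1/a) * (1/b) * dotR (Φ.mulVec u) (Φ.mulVec v) := by
      unfold dotR; rw [Finset.mul_sum]; exact Finset.sum_congr rfl fun i _ => by simp; ring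
    rw [eΦu, eΦv, edot, l2sq_smul, l2sq_smul, ← ha2, ← hb2] at hcross
    have h1a : (1/a) ^ 2 * a ^ 2 = 1 := by field_simp
    have h1b : (1/b) ^ 2 * b ^ 2 = 1 := by field_simp
    rw [h1a, h1b] at hcross
    have h' : |dotR (Φ.mulVec u) (Φ.mulVec v)| / (a * b) ≤
        (rhoPlus k Φ - rhoMinus k Φ) / 4 * (1 + 1) := by
      have e : |dotR (Φ.mulVec u) (Φ.mulVec v)| / (a * b)
          = |1 / a * (1 / b) * dotR (Φ.mulVec u) (Φ.mulVec v)| := by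
        rw [abs_mul, abs_of_pos (by positivity : (0:ℝ) < 1 / a * (1 / b))]
        field_simp
      rw [← e] at hcross
      exact hcross
    rw [div_le_iff₀ (by positivity : (0:ℝ) < a * b)] at h'
    calc |dotR (Φ.mulVec u) (Φ.mulVec v)|
        ≤ (rhoPlus k Φ - rhoMinus k Φ) / 4 * (1 + 1) * (a * b) := h'
      _ = (rhoPlus k Φ - rhoMinus k Φ) / 2 * (a * b) := by ring

end Aux4
section Aux5

variable {N : ℕ}

lemma exists_topk (h : Fin N → ℝ) (S : Finset (Fin N)) (k : ℕ) (hk : k ≤ S.card) :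
    ∃ T, T ⊆ S ∧ T.card = k ∧ ∀ i ∈ S \ T, ∀ j ∈ T, |h i| ≤ |h j| := by
  induction k with
  | zero => exact ⟨∅, Finset.empty_subset S, rfl, by simp⟩
  | succ n ih =>
    obtain ⟨T, hTS, hTcard, hTmax⟩ := ih (Nat.le_of_succ_le hk)
    have hne : (S \ T).Nonempty := by
      rw [← Finset.card_pos, Finset.card_sdiff_of_subset hTS, hTcard]
      omega
    obtain ⟨j₀, hj₀, hj₀max⟩ := Finset.exists_max_image (S \ T) (fun i => |h i|) hne
    have hj₀S : j₀ ∈ S := (Finset.mem_sdiff.mp hj₀).1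
    have hj₀T : j₀ ∉ T := (Finset.mem_sdiff.mp hj₀).2
    refine ⟨insert j₀ T, ?_, ?_, ?_⟩
    · intro x hx
      rcases Finset.mem_insert.mp hx with rfl | hx
      · exact hj₀S
      · exact hTS hx
    · rw [Finset.card_insert_of_notMem hj₀T, hTcard]
    · intro i hi j hj
      have hiST : i ∈ S \ T := by
        rw [Finset.mem_sdiff] at hi ⊢
        exact ⟨hi.1, fun hmem => hi.2 (Finset.mem_insert_of_mem hmem)⟩
      rcases Finset.mem_insert.mp hj with rfl | hjT
      · exact hj₀max i hiST
      · exact hTmax i hiST j hjT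

lemma sqrt_block_bound {h : Fin N → ℝ} {b : Finset (Fin N)} {l : ℕ} {M : ℝ} (hM : 0 ≤ M)
    (hcard : b.card ≤ l) (hbd : ∀ i ∈ b, |h i| ≤ M) :
    Real.sqrt (∑ i ∈ b, h i ^ 2) ≤ Real.sqrt l * M := by
  have h1 : ∑ i ∈ b, h i ^ 2 ≤ (l : ℝ) * M ^ 2 := by
    calc ∑ i ∈ b, h i ^ 2 ≤ ∑ _i ∈ b, M ^ 2 := by
          apply Finset.sum_le_sum
          intro i hi
          calc h i ^ 2 = |h i| ^ 2 := (sq_abs _).symm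
            _ ≤ M ^ 2 := by
              apply pow_le_pow_left₀ (abs_nonneg _) (hbd i hi)
      _ = (b.card : ℝ) * M ^ 2 := by rw [Finset.sum_const, nsmul_eq_mul]
      _ ≤ (l : ℝ) * M ^ 2 := by
          apply mul_le_mul_of_nonneg_right _ (sq_nonneg M)
          exact_mod_cast hcard
  calc Real.sqrt (∑ i ∈ b, h i ^ 2) ≤ Real.sqrt ((l : ℝ) * M ^ 2) := Real.sqrt_le_sqrt h1
    _ = Real.sqrt l * M := by
      rw [Real.sqrt_mul (Nat.cast_nonneg l), Real.sqrt_sq hM]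

lemma block_decomp (h : Fin N → ℝ) (l : ℕ) (hl : 1 ≤ l) :
    ∀ n : ℕ, ∀ S : Finset (Fin N), S.card ≤ n → ∀ M : ℝ, 0 ≤ M → (∀ i ∈ S, |h i| ≤ M) →
    ∃ B : List (Finset (Fin N)),
      (∀ b ∈ B, b ⊆ S) ∧ List.Pairwise Disjoint B ∧ (∀ b ∈ B, b.card ≤ l) ∧
      (S = B.foldr (· ∪ ·) ∅) ∧
      ((B.map (fun b => Real.sqrt (∑ i ∈ b, h i ^ 2))).sum
        ≤ Real.sqrt l * M + (∑ i ∈ S, |h i|) / Real.sqrt l) := by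
  intro n
  induction n with
  | zero =>
    intro S hcard M hM _hbd
    have hS : S = ∅ := Finset.card_eq_zero.mp (Nat.le_zero.mp hcard)
    subst hS
    refine ⟨[], by simp, by simp, by simp, by simp, ?_⟩
    simp
    positivity
  | succ n ih =>
    intro S hcard M hM hbd
    by_cases hSe : S = ∅
    · subst hSe
      refine ⟨[], by simp, by simp, by simp, by simp, ?_⟩
      simp
      positivity
    · have hSne : S.Nonempty := Finset.nonempty_iff_ne_empty.mpr hSe
      by_cases hSl : S.card ≤ l
      · refine ⟨[S], by simp, by simp, by simp [hSl], by simp, ?_⟩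
        simp only [List.map_cons, List.map_nil, List.sum_cons, List.sum_nil, add_zero]
        have := sqrt_block_bound hM hSl hbd
        have h2 : 0 ≤ (∑ i ∈ S, |h i|) / Real.sqrt l := by positivity
        linarith
      · push_neg at hSl
        obtain ⟨T, hTS, hTcard, hTmax⟩ := exists_topk h S l hSl.le
        have hTne : T.Nonempty := by
          rw [← Finset.card_pos, hTcard]; omega
        obtain ⟨j₁, hj₁, hminT⟩ := Finset.exists_min_image T (fun i => |h i|) hTne
        set M' := |h j₁| with hM'
        have hM'0 : 0 ≤ M' := abs_nonneg _
        have hbd' : ∀ i ∈ S \ T, |h i| ≤ M' := fun i hi => hTmax i hi j₁ hj₁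
        have hcard' : (S \ T).card ≤ n := by
          rw [Finset.card_sdiff_of_subset hTS, hTcard]
          omega
        obtain ⟨B', hB'S, hB'pw, hB'card, hB'union, hB'sum⟩ :=
          ih (S \ T) hcard' M' hM'0 hbd'
        refine ⟨T :: B', ?_, ?_, ?_, ?_, ?_⟩
        · intro b hb
          rcases List.mem_cons.mp hb with rfl | hb
          · exact hTS
          · exact (hB'S b hb).trans (Finset.sdiff_subset)
        · rw [List.pairwise_cons]
          refine ⟨fun b hb => ?_, hB'pw⟩
          have : b ⊆ S \ T := hB'S b hb
          exact Finset.disjoint_left.mpr fun x hxT hxb =>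
            (Finset.mem_sdiff.mp (this hxb)).2 hxT
        · intro b hb
          rcases List.mem_cons.mp hb with rfl | hb
          · exact hTcard.le
          · exact hB'card b hb
        · rw [List.foldr_cons, ← hB'union]
          rw [Finset.union_comm, Finset.sdiff_union_of_subset hTS]
        · simp only [List.map_cons, List.sum_cons]
          have hsqrtl : (0:ℝ) < Real.sqrt l := by
            apply Real.sqrt_pos.mpr
            exact_mod_cast hl
          have h1 : Real.sqrt (∑ i ∈ T, h i ^ 2) ≤ Real.sqrt l * M :=
            sqrt_block_bound hM hTcard.le (fun i hi => hbd i (hTS hi))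
          have h2 : Real.sqrt l * M' ≤ (∑ i ∈ T, |h i|) / Real.sqrt l := by
            rw [le_div_iff₀ hsqrtl]
            have hlM : (l : ℝ) * M' ≤ ∑ i ∈ T, |h i| := by
              have := Finset.card_nsmul_le_sum T (fun i => |h i|) M' (fun i hi => hminT i hi)
              rw [hTcard] at this
              simpa [nsmul_eq_mul] using this
            calc Real.sqrt l * M' * Real.sqrt l = (l : ℝ) * M' := by
                  rw [mul_comm (Real.sqrt l) M', mul_assoc,
                    Real.mul_self_sqrt (Nat.cast_nonneg l)]
                  ring
              _ ≤ ∑ i ∈ T, |h i| := hlM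
          have h3 : ∑ i ∈ S \ T, |h i| + ∑ i ∈ T, |h i| = ∑ i ∈ S, |h i| :=
            Finset.sum_sdiff hTS
          calc Real.sqrt (∑ i ∈ T, h i ^ 2) +
                (B'.map (fun b => Real.sqrt (∑ i ∈ b, h i ^ 2))).sum
              ≤ Real.sqrt l * M + (Real.sqrt l * M' + (∑ i ∈ S \ T, |h i|) / Real.sqrt l) := by
                linarith
            _ ≤ Real.sqrt l * M +
                ((∑ i ∈ T, |h i|) / Real.sqrt l + (∑ i ∈ S \ T, |h i|) / Real.sqrt l) := by
                linarith
            _ = Real.sqrt l * M + (∑ i ∈ S, |h i|) / Real.sqrt l := by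
                rw [← add_div, add_comm (∑ i ∈ T, |h i|)]
                rw [h3]

end Aux5
section Aux6

variable {m N : ℕ}

lemma dotR_zero_right (w : Fin m → ℝ) : dotR w 0 = 0 := by
  unfold dotR; exact Finset.sum_eq_zero fun i _ => by simp

lemma dotR_add_right (w a b : Fin m → ℝ) : dotR w (a + b) = dotR w a + dotR w b := by
  unfold dotR
  rw [← Finset.sum_add_distrib]
  exact Finset.sum_congr rfl fun i _ => by simp [Pi.add_apply]; ring

lemma mem_foldr_union {B : List (Finset (Fin N))} {x : Fin N} :
    x ∈ B.foldr (· ∪ ·) ∅ ↔ ∃ b ∈ B, x ∈ b := by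
  induction B with
  | nil => simp
  | cons b B ih => simp [List.foldr_cons, Finset.mem_union, ih]

lemma restrict_foldr (h : Fin N → ℝ) : ∀ B : List (Finset (Fin N)), List.Pairwise Disjoint B →
    restrict (B.foldr (· ∪ ·) ∅) h = (B.map (fun b => restrict b h)).sum := by
  intro B
  induction B with
  | nil => intro _; funext i; simp [restrict]
  | cons b B ih =>
    intro hpw
    rw [List.pairwise_cons] at hpw
    have hd : Disjoint b (B.foldr (· ∪ ·) ∅) := by
      rw [Finset.disjoint_left]
      intro x hxb hxU
      obtain ⟨c, hc, hxc⟩ := mem_foldr_union.mp hxU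
      exact (Finset.disjoint_left.mp (hpw.1 c hc) hxb) hxc
    rw [List.foldr_cons, restrict_union _ _ hd h, ih hpw.2, List.map_cons, List.sum_cons]

lemma sum_foldr_union (f : Fin N → ℝ) : ∀ B : List (Finset (Fin N)), List.Pairwise Disjoint B →
    ∑ i ∈ B.foldr (· ∪ ·) ∅, f i = (B.map (fun b => ∑ i ∈ b, f i)).sum := by
  intro B
  induction B with
  | nil => intro _; simp
  | cons b B ih =>
    intro hpw
    rw [List.pairwise_cons] at hpw
    have hd : Disjoint b (B.foldr (· ∪ ·) ∅) := by
      rw [Finset.disjoint_left]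
      intro x hxb hxU
      obtain ⟨c, hc, hxc⟩ := mem_foldr_union.mp hxU
      exact (Finset.disjoint_left.mp (hpw.1 c hc) hxb) hxc
    rw [List.foldr_cons, Finset.sum_union hd, ih hpw.2, List.map_cons, List.sum_cons]

lemma dot_mulVec_list_sum (Φ : Matrix (Fin m) (Fin N) ℝ) (w : Fin m → ℝ) :
    ∀ L : List (Fin N → ℝ),
      dotR w (Φ.mulVec L.sum) = (L.map (fun v => dotR w (Φ.mulVec v))).sum := by
  intro L
  induction L with
  | nil => simp [Matrix.mulVec_zero, dotR_zero_right]
  | cons v L ih =>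
    rw [List.sum_cons, Matrix.mulVec_add, dotR_add_right, ih, List.map_cons, List.sum_cons]

lemma sqrt_add_le (x y : ℝ) (hx : 0 ≤ x) (hy : 0 ≤ y) :
    Real.sqrt (x + y) ≤ Real.sqrt x + Real.sqrt y := by
  have h := Real.sqrt_le_sqrt (show x + y ≤ (Real.sqrt x + Real.sqrt y) ^ 2 by
    nlinarith [Real.sq_sqrt hx, Real.sq_sqrt hy, Real.sqrt_nonneg x, Real.sqrt_nonneg y])
  rwa [Real.sqrt_sq (by positivity)] at h

lemma sqrt_list_sum : ∀ L : List ℝ, (∀ x ∈ L, 0 ≤ x) →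
    Real.sqrt L.sum ≤ (L.map Real.sqrt).sum := by
  intro L
  induction L with
  | nil => simp
  | cons x L ih =>
    intro hpos
    have hx : 0 ≤ x := hpos x (List.mem_cons_self)
    have hL : ∀ y ∈ L, 0 ≤ y := fun y hy => hpos y (List.mem_cons_of_mem x hy)
    have hLsum : 0 ≤ L.sum := List.sum_nonneg hL
    rw [List.sum_cons, List.map_cons, List.sum_cons]
    calc Real.sqrt (x + L.sum) ≤ Real.sqrt x + Real.sqrt L.sum := sqrt_add_le x L.sum hx hLsum
      _ ≤ Real.sqrt x + (L.map Real.sqrt).sum := by linarith [ih hL]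

lemma quad_bound {A B C x : ℝ} (hA : 0 < A) (hB : 0 ≤ B) (hC : 0 ≤ C) (hx : 0 ≤ x)
    (h : A * x ^ 2 ≤ B * x + C) : x ≤ B / A + Real.sqrt (C / A) := by
  set r := Real.sqrt (C / A) with hrdef
  have hr : 0 ≤ r := Real.sqrt_nonneg _
  have hr2 : A * r ^ 2 = C := by
    rw [hrdef, Real.sq_sqrt (by positivity)]
    field_simp
  rcases le_or_gt x r with hxr | hxr
  · have hBA : 0 ≤ B / A := by positivity
    linarith
  · have hxpos : 0 < x := lt_of_le_of_lt hr hxr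
    have h3 : (A * x) * x ≤ (B + A * r) * x := by nlinarith [mul_lt_mul_of_pos_left hxr (mul_pos hA hxpos)]
    have h4 : A * x ≤ B + A * r := le_of_mul_le_mul_right h3 hxpos
    have h5 : x ≤ (B + A * r) / A := by
      rw [le_div_iff₀ hA]
      linarith
    calc x ≤ (B + A * r) / A := h5
      _ = B / A + r := by field_simp

end Aux6
section Aux7

variable {m N : ℕ}

lemma l1Norm_nonneg (v : Fin N → ℝ) : 0 ≤ l1Norm v :=
  Finset.sum_nonneg fun i _ => abs_nonneg _

lemma abs_dotR_le (g x : Fin N → ℝ) : |dotR g x| ≤ linfNorm g * l1Norm x := by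
  unfold dotR l1Norm linfNorm
  have hbdd : BddAbove (Set.range fun j => |g j|) := (Set.finite_range _).bddAbove
  calc |∑ i, g i * x i| ≤ ∑ i, |g i * x i| := Finset.abs_sum_le_sum_abs _ _
    _ = ∑ i, |g i| * |x i| := Finset.sum_congr rfl fun i _ => abs_mul _ _
    _ ≤ ∑ i, (⨆ j, |g j|) * |x i| := by
        apply Finset.sum_le_sum
        intro i _
        exact mul_le_mul_of_nonneg_right (le_ciSup hbdd i) (abs_nonneg _)
    _ = (⨆ j, |g j|) * ∑ i, |x i| := (Finset.mul_sum _ _ _).symm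

lemma l1_split (T : Finset (Fin N)) (v : Fin N → ℝ) :
    l1Norm v = l1Norm (restrict T v) + l1Norm (restrict Tᶜ v) := by
  rw [l1Norm_restrict, l1Norm_restrict]
  exact (Finset.sum_add_sum_compl T _).symm

lemma l2sq_split (T : Finset (Fin N)) (v : Fin N → ℝ) :
    l2sq v = l2sq (restrict T v) + l2sq (restrict Tᶜ v) := by
  rw [l2sq_restrict, l2sq_restrict]
  exact (Finset.sum_add_sum_compl T _).symm

lemma l1_diff_bound (xstar xhat : Fin N → ℝ) (T₀ : Finset (Fin N)) :
    l1Norm xstar - l1Norm xhat ≤ l1Norm (restrict T₀ (xhat - xstar))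
      - l1Norm (restrict T₀ᶜ (xhat - xstar)) + 2 * l1Norm (restrict T₀ᶜ xstar) := by
  rw [l1Norm_restrict, l1Norm_restrict, l1Norm_restrict]
  have e1 : l1Norm xstar = ∑ i ∈ T₀, |xstar i| + ∑ i ∈ T₀ᶜ, |xstar i| :=
    (Finset.sum_add_sum_compl T₀ _).symm
  have e2 : l1Norm xhat = ∑ i ∈ T₀, |xhat i| + ∑ i ∈ T₀ᶜ, |xhat i| :=
    (Finset.sum_add_sum_compl T₀ _).symm
  have s1 : ∑ i ∈ T₀, |xstar i| - ∑ i ∈ T₀, |xhat i| ≤ ∑ i ∈ T₀, |(xhat - xstar) i| := by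
    rw [← Finset.sum_sub_distrib]
    apply Finset.sum_le_sum
    intro i _
    have h := abs_sub_abs_le_abs_sub (xstar i) (xhat i)
    have e : |xstar i - xhat i| = |(xhat - xstar) i| := by
      rw [abs_sub_comm]; simp [Pi.sub_apply]
    linarith [h, e.le, e.ge]
  have s2 : ∑ i ∈ T₀ᶜ, |xstar i| - ∑ i ∈ T₀ᶜ, |xhat i| ≤
      ∑ i ∈ T₀ᶜ, (2 * |xstar i| - |(xhat - xstar) i|) := by
    rw [← Finset.sum_sub_distrib]
    apply Finset.sum_le_sum
    intro i _
    have h : |(xhat - xstar) i| ≤ |xhat i| + |xstar i| := by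
      simp only [Pi.sub_apply]
      exact abs_sub (xhat i) (xstar i)
    linarith
  rw [e1, e2]
  have s3 : ∑ i ∈ T₀ᶜ, (2 * |xstar i| - |(xhat - xstar) i|)
      = 2 * ∑ i ∈ T₀ᶜ, |xstar i| - ∑ i ∈ T₀ᶜ, |(xhat - xstar) i| := by
    rw [Finset.sum_sub_distrib, Finset.mul_sum]
  linarith [s1, s2, s3.le, s3.ge]

lemma key1 (Φ : Matrix (Fin m) (Fin N) ℝ) (y : Fin m → ℝ) (lam Δ : ℝ)
    (hlamΔ : 0 ≤ lam * Δ) (xhat xstar : Fin N → ℝ)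
    (hobj : lassoObj Φ y lam Δ xhat ≤ lassoObj Φ y lam Δ xstar)
    (hdual : linfNorm (Φ.transpose.mulVec (Φ.mulVec xstar - y)) ≤ lam * Δ / 2)
    (T₀ : Finset (Fin N)) :
    l2sq (Φ.mulVec (xhat - xstar)) + lam * Δ * l1Norm (restrict T₀ᶜ (xhat - xstar))
      ≤ 3 * (lam * Δ) * l1Norm (restrict T₀ (xhat - xstar))
        + 4 * (lam * Δ) * l1Norm (restrict T₀ᶜ xstar) := by
  set h := xhat - xstar with hh
  set w := Φ.mulVec xstar - y with hw
  have edec : Φ.mulVec xhat - y = w + Φ.mulVec h := by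
    rw [hw, hh, Matrix.mulVec_sub]
    funext i
    simp only [Pi.sub_apply, Pi.add_apply]
    ring
  have hexp : l2sq (Φ.mulVec xhat - y)
      = l2sq w + 2 * dotR w (Φ.mulVec h) + l2sq (Φ.mulVec h) := by
    rw [edec]; exact l2sq_add _ _
  unfold lassoObj at hobj
  rw [hexp] at hobj
  have hdot : - dotR w (Φ.mulVec h) ≤ (lam * Δ / 2) * l1Norm h := by
    have h1 : |dotR w (Φ.mulVec h)| ≤ linfNorm (Φ.transpose.mulVec w) * l1Norm h := by
      rw [dotR_transpose]
      exact abs_dotR_le _ _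
    have h2 : linfNorm (Φ.transpose.mulVec w) * l1Norm h ≤ (lam * Δ / 2) * l1Norm h :=
      mul_le_mul_of_nonneg_right hdual (l1Norm_nonneg h)
    calc - dotR w (Φ.mulVec h) ≤ |dotR w (Φ.mulVec h)| := neg_le_abs _
      _ ≤ _ := le_trans h1 h2
  have hl1d := l1_diff_bound xstar xhat T₀
  rw [← hh] at hl1d
  have hsplit := l1_split T₀ h
  have hmul : lam * Δ * (l1Norm xstar - l1Norm xhat)
      ≤ lam * Δ * (l1Norm (restrict T₀ h) - l1Norm (restrict T₀ᶜ h)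
        + 2 * l1Norm (restrict T₀ᶜ xstar)) :=
    mul_le_mul_of_nonneg_left hl1d hlamΔ
  nlinarith [hobj, hdot, hmul, hsplit]

end Aux7
section Aux8

variable {N : ℕ}

lemma l1_restrict_le_sqrt_card (T : Finset (Fin N)) (v : Fin N → ℝ) :
    l1Norm (restrict T v) ≤ Real.sqrt T.card * l2Norm (restrict T v) := by
  rw [l1Norm_restrict, l2Norm_eq, l2sq_restrict]
  have h1 : (∑ i ∈ T, |v i|) ^ 2 ≤ (T.card : ℝ) * ∑ i ∈ T, v i ^ 2 := by
    have h := Finset.sum_mul_sq_le_sq_mul_sq T (fun _ => (1:ℝ)) (fun i => |v i|)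
    simpa [sq_abs] using h
  calc ∑ i ∈ T, |v i| = Real.sqrt ((∑ i ∈ T, |v i|) ^ 2) :=
        (Real.sqrt_sq (Finset.sum_nonneg fun i _ => abs_nonneg _)).symm
    _ ≤ Real.sqrt ((T.card : ℝ) * ∑ i ∈ T, v i ^ 2) := Real.sqrt_le_sqrt h1
    _ = Real.sqrt T.card * Real.sqrt (∑ i ∈ T, v i ^ 2) :=
        Real.sqrt_mul (Nat.cast_nonneg _) _

lemma l2Norm_restrict_mono {A C : Finset (Fin N)} (hAC : A ⊆ C) (v : Fin N → ℝ) :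
    l2Norm (restrict A v) ≤ l2Norm (restrict C v) := by
  rw [l2Norm_eq, l2Norm_eq, l2sq_restrict, l2sq_restrict]
  exact Real.sqrt_le_sqrt
    (Finset.sum_le_sum_of_subset_of_nonneg hAC fun i _ _ => sq_nonneg _)

lemma list_abs_sum_le (L : List ℝ) : |L.sum| ≤ (L.map abs).sum := by
  induction L with
  | nil => simp
  | cons x L ih =>
    rw [List.sum_cons, List.map_cons, List.sum_cons]
    exact (abs_add_le _ _).trans (by linarith)

lemma list_sum_le_sum {α : Type*} (L : List α) (f g : α → ℝ) (h : ∀ b ∈ L, f b ≤ g b) :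
    (L.map f).sum ≤ (L.map g).sum := by
  induction L with
  | nil => simp
  | cons x L ih =>
    simp only [List.map_cons, List.sum_cons]
    have h1 := h x (List.mem_cons_self)
    have h2 := ih fun b hb => h b (List.mem_cons_of_mem x hb)
    linarith

lemma list_sum_mul_left {α : Type*} (L : List α) (c : ℝ) (f : α → ℝ) :
    (L.map (fun b => c * f b)).sum = c * (L.map f).sum := by
  induction L with
  | nil => simp
  | cons x L ih =>
    simp only [List.map_cons, List.sum_cons, ih]
    ring

lemma list_sum_nonneg {α : Type*} (L : List α) (f : α → ℝ) (h : ∀ b ∈ L, 0 ≤ f b) :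
    0 ≤ (L.map f).sum := by
  induction L with
  | nil => simp
  | cons x L ih =>
    simp only [List.map_cons, List.sum_cons]
    have h1 := h x (List.mem_cons_self)
    have h2 := ih fun b hb => h b (List.mem_cons_of_mem x hb)
    linarith

end Aux8
set_option maxHeartbeats 1000000 in
theorem stmt14 {Mt Mb N : ℕ} (Φt : Matrix (Fin Mt) (Fin N) ℝ) (yt : Fin Mt → ℝ)
    (Φb : Matrix (Fin Mb) (Fin N) ℝ) (yb : Fin Mb → ℝ)
    (lam Δ : ℝ) (hlam : 0 < lam) (hΔ : 0 < Δ)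
    (xhat xstar : Fin N → ℝ)
    (hxstarF : xstar ∈ feasible Φt yt Φb yb Δ)
    (hxhatF : xhat ∈ feasible Φt yt Φb yb Δ)
    (hopt : ∀ x ∈ feasible Φt yt Φb yb Δ, lassoObj Φt yt lam Δ xhat ≤ lassoObj Φt yt lam Δ x)
    (hdual : linfNorm (Φt.transpose.mulVec (Φt.mulVec xstar - yt)) ≤ lam * Δ / 2)
    (s l : ℕ) (hs : 1 ≤ s) (hl : 1 ≤ l)
    (T₀ T₁ : Finset (Fin N)) (hT₀ : T₀.card = s)
    (hT₁sub : T₁ ⊆ T₀ᶜ) (hT₁card : T₁.card = l)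
    (hlargest : ∀ i ∈ T₀ᶜ \ T₁, ∀ i' ∈ T₁, |(xhat - xstar) i| ≤ |(xhat - xstar) i'|)
    (hA0 : 0 < A0 s l Φt) :
    l2Norm (xhat - xstar) ≤
      6 * C2 s l Φt ^ 2 * Real.sqrt s * lam * Δ / Real.sqrt (1 + 9 * (s : ℝ) / l) +
        (C1 s l Φt / Real.sqrt l) * l1Norm (restrict T₀ᶜ xstar) +
        2.5 * C2 s l Φt * Real.sqrt (lam * Δ * l1Norm (restrict T₀ᶜ xstar)) := by
  rcases Nat.eq_zero_or_pos N with hN | hN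
  · subst hN
    have h2 : l2Norm (xhat - xstar) = 0 := by simp [l2Norm]
    have hl1 : l1Norm (restrict T₀ᶜ xstar) = 0 := by simp [l1Norm]
    rw [h2, hl1]
    simp only [mul_zero, Real.sqrt_zero, add_zero]
    have hC2 : 0 ≤ C2 s l Φt := Real.sqrt_nonneg _
    apply div_nonneg _ (Real.sqrt_nonneg _)
    have h1 : 0 ≤ 6 * C2 s l Φt ^ 2 * Real.sqrt s :=
      mul_nonneg (mul_nonneg (by norm_num) (sq_nonneg _)) (Real.sqrt_nonneg _)
    exact mul_nonneg (mul_nonneg h1 hlam.le) hΔ.le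
  · have hobj := hopt xstar hxstarF
    have hlamΔ : (0:ℝ) < lam * Δ := mul_pos hlam hΔ
    have hkey1 := key1 Φt yt lam Δ hlamΔ.le xhat xstar hobj hdual T₀
    set h := xhat - xstar with hh
    set ρ := l1Norm (restrict T₀ᶜ xstar) with hρ
    set Z := l1Norm (restrict T₀ᶜ h) with hZ
    set α := rhoMinus (s + l) Φt with hα
    set β := rhoPlus (s + 2 * l) Φt with hβ
    set γ := rhoMinus (s + 2 * l) Φt with hγ
    set K := Real.sqrt (1 + 9 * (s : ℝ) / l) with hK
    have hl0 : (0:ℝ) < l := by exact_mod_cast hl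
    have hs0 : (0:ℝ) < s := by exact_mod_cast hs
    have hsql : (0:ℝ) < Real.sqrt l := Real.sqrt_pos.mpr hl0
    have hsqs : (0:ℝ) ≤ Real.sqrt s := Real.sqrt_nonneg _
    have hK2 : K ^ 2 = 1 + 9 * (s : ℝ) / l := Real.sq_sqrt (by positivity)
    have hK0 : (0:ℝ) < K := Real.sqrt_pos.mpr (by positivity)
    have hρ0 : 0 ≤ ρ := l1Norm_nonneg _
    have hZ0 : 0 ≤ Z := l1Norm_nonneg _
    set a := l1Norm (restrict T₀ h) with ha
    have ha0 : 0 ≤ a := l1Norm_nonneg _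
    set u := restrict (T₀ ∪ T₁) h with hu
    set U := l2Norm u with hU
    have hU0 : 0 ≤ U := Real.sqrt_nonneg _
    have hUsq : U ^ 2 = l2sq u := Real.sq_sqrt (l2sq_nonneg u)
    have ha_le : a ≤ Real.sqrt s * U := by
      have h1 := l1_restrict_le_sqrt_card T₀ h
      rw [hT₀] at h1
      have h2 : l2Norm (restrict T₀ h) ≤ U :=
        l2Norm_restrict_mono Finset.subset_union_left h
      calc a ≤ Real.sqrt s * l2Norm (restrict T₀ h) := h1
        _ ≤ Real.sqrt s * U := mul_le_mul_of_nonneg_left h2 hsqs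
    have hcone : Z ≤ 3 * a + 4 * ρ := by
      have h1 : lam * Δ * Z ≤ lam * Δ * (3 * a + 4 * ρ) := by
        linarith only [l2sq_nonneg (Φt.mulVec h), hkey1]
      exact le_of_mul_le_mul_left h1 hlamΔ
    have hZU : Z ≤ 3 * Real.sqrt s * U + 4 * ρ := by linarith only [hcone, ha_le]
    have hT₁ne : T₁.Nonempty := by rw [← Finset.card_pos, hT₁card]; omega
    obtain ⟨j₁, hj₁, hminT⟩ := Finset.exists_min_image T₁ (fun i => |h i|) hT₁ne
    set S := (T₀ ∪ T₁)ᶜ with hS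
    have hST : S = T₀ᶜ \ T₁ := by
      ext x
      simp only [hS, Finset.mem_compl, Finset.mem_union, Finset.mem_sdiff]
      tauto
    have hbdS : ∀ i ∈ S, |h i| ≤ |h j₁| := by
      intro i hi
      rw [hST] at hi
      exact hlargest i hi j₁ hj₁
    obtain ⟨B, hBsub, hBpw, hBcard, hBunion, hBsum⟩ :=
      block_decomp h l hl S.card S le_rfl |h j₁| (abs_nonneg _) hbdS
    have hmapeq : (fun b : Finset (Fin N) => Real.sqrt (∑ i ∈ b, h i ^ 2))
        = fun b => l2Norm (restrict b h) := by
      funext b; rw [l2Norm_eq, l2sq_restrict]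
    rw [hmapeq] at hBsum
    set W := (B.map (fun b => l2Norm (restrict b h))).sum with hW
    have hW0 : 0 ≤ W := list_sum_nonneg _ _ fun b _ => Real.sqrt_nonneg _
    have hMT₁ : (l : ℝ) * |h j₁| ≤ ∑ i ∈ T₁, |h i| := by
      have h1 := Finset.card_nsmul_le_sum T₁ (fun i => |h i|) |h j₁| hminT
      rw [hT₁card] at h1
      simpa [nsmul_eq_mul] using h1
    have hZsplit : ∑ i ∈ S, |h i| + ∑ i ∈ T₁, |h i| = Z := by
      rw [hZ, l1Norm_restrict, hST]
      exact Finset.sum_sdiff hT₁sub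
    have hWZ : W ≤ Z / Real.sqrt l := by
      have h2 : Real.sqrt l * |h j₁| ≤ (∑ i ∈ T₁, |h i|) / Real.sqrt l := by
        rw [le_div_iff₀ hsql]
        calc Real.sqrt l * |h j₁| * Real.sqrt l = (l:ℝ) * |h j₁| := by
              rw [mul_comm (Real.sqrt l) (|h j₁|), mul_assoc,
                Real.mul_self_sqrt hl0.le]
              ring
          _ ≤ _ := hMT₁
      calc W ≤ Real.sqrt l * |h j₁| + (∑ i ∈ S, |h i|) / Real.sqrt l := hBsum
        _ ≤ (∑ i ∈ T₁, |h i|) / Real.sqrt l + (∑ i ∈ S, |h i|) / Real.sqrt l := by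
            linarith only [h2]
        _ = Z / Real.sqrt l := by rw [← add_div, add_comm, hZsplit]
    set t := restrict S h with ht
    have hut : u + t = h := restrict_add_compl (T₀ ∪ T₁) h
    have hΦexp : l2sq (Φt.mulVec h) = l2sq (Φt.mulVec u)
        + 2 * dotR (Φt.mulVec u) (Φt.mulVec t) + l2sq (Φt.mulVec t) := by
      have e : Φt.mulVec h = Φt.mulVec u + Φt.mulVec t := by
        rw [← hut, Matrix.mulVec_add]
      rw [e]; exact l2sq_add _ _
    have hcardT01 : (T₀ ∪ T₁).card ≤ s + l := by
      have := Finset.card_union_le T₀ T₁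
      omega
    have hα_bound : α * l2sq u ≤ l2sq (Φt.mulVec u) :=
      rhoMinus_mul_le hcardT01 (restrict_restrict _ _)
    have htlist : t = (B.map (fun b => restrict b h)).sum := by
      rw [ht]
      conv_lhs => rw [hBunion]
      exact restrict_foldr h B hBpw
    have hdotsum : dotR (Φt.mulVec u) (Φt.mulVec t)
        = (B.map (fun b => dotR (Φt.mulVec u) (Φt.mulVec (restrict b h)))).sum := by
      rw [htlist, dot_mulVec_list_sum, List.map_map]
      rfl
    have hcross : ∀ b ∈ B, |dotR (Φt.mulVec u) (Φt.mulVec (restrict b h))|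
        ≤ (β - γ) / 2 * (U * l2Norm (restrict b h)) := by
      intro b hb
      have hdisj : Disjoint (T₀ ∪ T₁) b := by
        rw [Finset.disjoint_left]
        intro x hx hxb
        have hmem := hBsub b hb hxb
        rw [hS, Finset.mem_compl] at hmem
        exact hmem hx
      have hcard : (T₀ ∪ T₁).card + b.card ≤ s + 2 * l := by
        have h1 := hBcard b hb
        omega
      exact cross_normalized (restrict_restrict _ _) (restrict_restrict _ _) hdisj hcard
    have hdot_lower : -((β - γ) / 2 * U * W) ≤ dotR (Φt.mulVec u) (Φt.mulVec t) := by
      rw [hdotsum]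
      set L := B.map (fun b => dotR (Φt.mulVec u) (Φt.mulVec (restrict b h))) with hL
      have h1 : |L.sum| ≤ (L.map abs).sum := list_abs_sum_le L
      have h2 : (L.map abs).sum
          ≤ (B.map (fun b => (β - γ) / 2 * U * l2Norm (restrict b h))).sum := by
        rw [hL, List.map_map]
        apply list_sum_le_sum
        intro b hb
        have h3 := hcross b hb
        simp only [Function.comp_apply]
        calc |dotR (Φt.mulVec u) (Φt.mulVec (restrict b h))|
            ≤ (β - γ) / 2 * (U * l2Norm (restrict b h)) := h3
          _ = (β - γ) / 2 * U * l2Norm (restrict b h) := by ring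
      have h3 : (B.map (fun b => (β - γ) / 2 * U * l2Norm (restrict b h))).sum
          = (β - γ) / 2 * U * W := by
        rw [hW]
        exact list_sum_mul_left B ((β - γ) / 2 * U) _
      have h4 : |L.sum| ≤ (β - γ) / 2 * U * W := by
        calc |L.sum| ≤ (L.map abs).sum := h1
          _ ≤ _ := h2
          _ = _ := h3
      linarith only [h4, neg_abs_le L.sum]
    have hδ : 0 ≤ β - γ := by
      have h1 := rhoMinus_le_rhoPlus (k := s + 2 * l) (Φ := Φt) (by omega) hN
      linarith only [h1]
    have hΦh_lower : α * U ^ 2 - (β - γ) * U * W ≤ l2sq (Φt.mulVec h) := by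
      rw [hΦexp, hUsq]
      have h1 := l2sq_nonneg (Φt.mulVec t)
      linarith only [h1, hα_bound, hdot_lower]
    have hA0def : A0 s l Φt = α - 3 * Real.sqrt ((s:ℝ) / l) * (β - γ) := rfl
    have hA1def : A1 s l Φt = 4 * (β - γ) := rfl
    have hsl : Real.sqrt ((s:ℝ) / l) = Real.sqrt s / Real.sqrt l :=
      Real.sqrt_div hs0.le l
    have hΦh_upper : l2sq (Φt.mulVec h) ≤ 3 * (lam * Δ) * (Real.sqrt s * U)
        + 4 * (lam * Δ) * ρ := by
      have h1 : 0 ≤ lam * Δ * Z := mul_nonneg hlamΔ.le hZ0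
      have h2 : 3 * (lam * Δ) * a ≤ 3 * (lam * Δ) * (Real.sqrt s * U) :=
        mul_le_mul_of_nonneg_left ha_le (by linarith [hlamΔ.le])
      linarith only [hkey1, h1, h2]
    have hWle : W ≤ (3 * Real.sqrt s * U + 4 * ρ) / Real.sqrt l := by
      exact hWZ.trans ((div_le_div_iff_of_pos_right hsql).mpr hZU)
    have hWbound : (β - γ) * U * W
        ≤ (β - γ) * U * ((3 * Real.sqrt s * U + 4 * ρ) / Real.sqrt l) := by
      have h1 : 0 ≤ (β - γ) * U := mul_nonneg hδ hU0
      exact mul_le_mul_of_nonneg_left hWle h1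
    have hexpand : (β - γ) * U * ((3 * Real.sqrt s * U + 4 * ρ) / Real.sqrt l)
        = 3 * (Real.sqrt s / Real.sqrt l) * (β - γ) * U ^ 2
          + 4 * (β - γ) * ρ / Real.sqrt l * U := by
      field_simp
    have hquad : A0 s l Φt * U ^ 2
        ≤ (3 * (lam * Δ) * Real.sqrt s + A1 s l Φt * ρ / Real.sqrt l) * U
          + 4 * (lam * Δ) * ρ := by
      rw [hA0def, hA1def, hsl]
      linarith only [hΦh_lower, hΦh_upper, hWbound, hexpand]
    have hBnn : 0 ≤ 3 * (lam * Δ) * Real.sqrt s + A1 s l Φt * ρ / Real.sqrt l := by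
      rw [hA1def]
      have h1 : 0 ≤ 3 * (lam * Δ) * Real.sqrt s :=
        mul_nonneg (by linarith [hlamΔ.le]) hsqs
      have h2 : 0 ≤ 4 * (β - γ) * ρ / Real.sqrt l :=
        div_nonneg (mul_nonneg (mul_nonneg (by norm_num) hδ) hρ0) hsql.le
      linarith only [h1, h2]
    have hCnn : 0 ≤ 4 * (lam * Δ) * ρ := by
      have h9 := mul_nonneg hlamΔ.le hρ0
      linarith only [h9]
    have hUb := quad_bound hA0 hBnn hCnn hU0 hquad
    -- tail bound
    have htsum : l2sq t = (B.map (fun b => ∑ i ∈ b, h i ^ 2)).sum := by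
      rw [ht, l2sq_restrict]
      conv_lhs => rw [hBunion]
      exact sum_foldr_union _ B hBpw
    have hTT : l2Norm t ≤ W := by
      rw [l2Norm_eq, htsum]
      have h1 := sqrt_list_sum (B.map (fun b => ∑ i ∈ b, h i ^ 2)) (by
        intro x hx
        obtain ⟨b, hb, rfl⟩ := List.mem_map.mp hx
        exact Finset.sum_nonneg fun i _ => sq_nonneg _)
      rw [List.map_map] at h1
      have e : (Real.sqrt ∘ fun b : Finset (Fin N) => ∑ i ∈ b, h i ^ 2)
          = fun b => l2Norm (restrict b h) := by
        funext b
        simp only [Function.comp_apply]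
        rw [l2Norm_eq, l2sq_restrict]
      rw [e] at h1
      exact h1
    have hTT2 : l2Norm t ≤ 3 * (Real.sqrt s / Real.sqrt l) * U + 4 * ρ / Real.sqrt l := by
      have e : (3 * Real.sqrt s * U + 4 * ρ) / Real.sqrt l
          = 3 * (Real.sqrt s / Real.sqrt l) * U + 4 * ρ / Real.sqrt l := by
        field_simp
      linarith only [hTT, hWle, e]
    have hl2split : l2sq h = l2sq u + l2sq t := by
      rw [hu, ht, hS]
      exact l2sq_split (T₀ ∪ T₁) h
    have hK3 : 3 * (Real.sqrt s / Real.sqrt l) ≤ K := by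
      rw [← hsl, hK]
      have h1 : Real.sqrt (9 * ((s:ℝ) / l)) = 3 * Real.sqrt ((s:ℝ) / l) := by
        rw [show (9:ℝ) = 3 ^ 2 by norm_num,
          Real.sqrt_mul (by positivity : (0:ℝ) ≤ 3 ^ 2),
          Real.sqrt_sq (by norm_num : (0:ℝ) ≤ 3)]
      rw [← h1]
      apply Real.sqrt_le_sqrt
      have e2 : 9 * ((s:ℝ) / l) = 9 * (s:ℝ) / l := by ring
      linarith only [e2.le, e2.ge]
    have hfinal1 : l2Norm h ≤ K * U + 4 * ρ / Real.sqrt l := by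
      set c := 4 * ρ / Real.sqrt l with hc
      have hc0 : 0 ≤ c := by positivity
      set b := 3 * (Real.sqrt s / Real.sqrt l) * U with hb
      have hb0 : 0 ≤ b := mul_nonneg (by positivity) hU0
      have hbK : b ≤ K * U := mul_le_mul_of_nonneg_right hK3 hU0
      have hTTle : l2Norm t ≤ b + c := by linarith only [hTT2, hb.le, hb.ge, hc.le, hc.ge]
      have hTT0 : 0 ≤ l2Norm t := Real.sqrt_nonneg _
      have hTTsq : (l2Norm t) ^ 2 = l2sq t := Real.sq_sqrt (l2sq_nonneg t)
      have hb2 : b ^ 2 = 9 * ((s:ℝ) / l) * U ^ 2 := by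
        rw [hb]
        have e1 : (Real.sqrt s) ^ 2 = (s:ℝ) := Real.sq_sqrt hs0.le
        have e2 : (Real.sqrt l) ^ 2 = (l:ℝ) := Real.sq_sqrt hl0.le
        rw [mul_pow, mul_pow, div_pow, e1, e2]
        norm_num
      have hsq : l2sq h ≤ (K * U + c) ^ 2 := by
        have e : l2sq h = U ^ 2 + (l2Norm t) ^ 2 := by rw [hUsq, hTTsq]; exact hl2split
        have h2 : (l2Norm t) ^ 2 ≤ (b + c) ^ 2 := by
          have := pow_le_pow_left₀ hTT0 hTTle 2
          simpa using this
        have hKU : (1 + 9 * (s:ℝ) / l) * U ^ 2 = K ^ 2 * U ^ 2 := by rw [hK2]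
        have e9 : 9 * ((s:ℝ) / l) * U ^ 2 = 9 * (s:ℝ) / l * U ^ 2 := by ring
        have hbc : b * c ≤ K * U * c := mul_le_mul_of_nonneg_right hbK hc0
        linarith only [h2, hb2, hbc, e, hKU, e9]
      calc l2Norm h = Real.sqrt (l2sq h) := l2Norm_eq h
        _ ≤ Real.sqrt ((K * U + c) ^ 2) := Real.sqrt_le_sqrt hsq
        _ = K * U + c :=
            Real.sqrt_sq (add_nonneg (mul_nonneg hK0.le hU0) hc0)
    -- final assembly
    have hchain : l2Norm h ≤ K * ((3 * (lam * Δ) * Real.sqrt s + A1 s l Φt * ρ / Real.sqrt l)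
        / A0 s l Φt + Real.sqrt (4 * (lam * Δ) * ρ / A0 s l Φt)) + 4 * ρ / Real.sqrt l := by
      have h1 := mul_le_mul_of_nonneg_left hUb hK0.le
      linarith only [h1, hfinal1]
    have hC2def : C2 s l Φt = Real.sqrt ((1 + 9 * (s:ℝ) / l) / A0 s l Φt) := rfl
    have hC2sq : C2 s l Φt ^ 2 = (1 + 9 * (s:ℝ) / l) / A0 s l Φt := by
      rw [hC2def]
      exact Real.sq_sqrt (div_nonneg (by positivity) hA0.le)
    have hA0ne : A0 s l Φt ≠ 0 := ne_of_gt hA0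
    have hKne : K ≠ 0 := ne_of_gt hK0
    have hsqlne : Real.sqrt l ≠ 0 := ne_of_gt hsql
    have E1 : K * (3 * (lam * Δ) * Real.sqrt s / A0 s l Φt)
        ≤ 6 * C2 s l Φt ^ 2 * Real.sqrt s * lam * Δ / K := by
      have e : 6 * C2 s l Φt ^ 2 * Real.sqrt s * lam * Δ / K
          = 2 * (K * (3 * (lam * Δ) * Real.sqrt s / A0 s l Φt)) := by
        rw [hC2sq, ← hK2]
        field_simp
        ring
      rw [e]
      have h0 : 0 ≤ K * (3 * (lam * Δ) * Real.sqrt s / A0 s l Φt) := by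
        apply mul_nonneg hK0.le
        apply div_nonneg _ hA0.le
        have h8 := mul_nonneg hlamΔ.le hsqs
        linarith only [h8]
      linarith only [h0]
    have hC1def : C1 s l Φt = 4 + K * A1 s l Φt / A0 s l Φt := rfl
    have E2 : K * (A1 s l Φt * ρ / Real.sqrt l / A0 s l Φt) + 4 * ρ / Real.sqrt l
        = (C1 s l Φt / Real.sqrt l) * ρ := by
      rw [hC1def]
      field_simp
      ring
    have E3 : K * Real.sqrt (4 * (lam * Δ) * ρ / A0 s l Φt)
        ≤ 2.5 * C2 s l Φt * Real.sqrt (lam * Δ * ρ) := by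
      have h1 : K * Real.sqrt (4 * (lam * Δ) * ρ / A0 s l Φt)
          = Real.sqrt (K ^ 2 * (4 * (lam * Δ) * ρ / A0 s l Φt)) := by
        rw [Real.sqrt_mul (sq_nonneg K), Real.sqrt_sq hK0.le]
      have h2 : K ^ 2 * (4 * (lam * Δ) * ρ / A0 s l Φt)
          = 4 * ((1 + 9 * (s:ℝ) / l) / A0 s l Φt * (lam * Δ * ρ)) := by
        rw [hK2]; ring
      have h4 : Real.sqrt 4 = 2 := by
        rw [show (4:ℝ) = 2 ^ 2 by norm_num, Real.sqrt_sq (by norm_num : (0:ℝ) ≤ 2)]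
      rw [h1, h2, Real.sqrt_mul (by norm_num : (0:ℝ) ≤ 4),
        Real.sqrt_mul (div_nonneg (by positivity) hA0.le), h4, ← hC2def]
      have h5 : 0 ≤ C2 s l Φt * Real.sqrt (lam * Δ * ρ) :=
        mul_nonneg (Real.sqrt_nonneg _) (Real.sqrt_nonneg _)
      linarith only [h5]
    have F : l2Norm h ≤ K * (3 * (lam * Δ) * Real.sqrt s / A0 s l Φt)
        + (K * (A1 s l Φt * ρ / Real.sqrt l / A0 s l Φt) + 4 * ρ / Real.sqrt l)
        + K * Real.sqrt (4 * (lam * Δ) * ρ / A0 s l Φt) := by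
      have e : K * ((3 * (lam * Δ) * Real.sqrt s + A1 s l Φt * ρ / Real.sqrt l) / A0 s l Φt
            + Real.sqrt (4 * (lam * Δ) * ρ / A0 s l Φt)) + 4 * ρ / Real.sqrt l
          = K * (3 * (lam * Δ) * Real.sqrt s / A0 s l Φt)
            + (K * (A1 s l Φt * ρ / Real.sqrt l / A0 s l Φt) + 4 * ρ / Real.sqrt l)
            + K * Real.sqrt (4 * (lam * Δ) * ρ / A0 s l Φt) := by ring
      linarith only [hchain, e]
    exact F.trans (add_le_add (add_le_add E1 E2.le) E3)
end
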